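/- arXiv:2001.01539 — 5 statements merged into one kernel-verified Lean document; each statement's English description precedes it below -/
import Mathlib

section
/- If G is a group normally generated by k elements x_1,...,x_k, then the reduced group RG (the quotient of G by the normal subgroup generated by the commutators [x_i, g x_i g⁻¹] for all i and g ∈ G) is nilpotent of class at most k. -/
open scoped commutatorElement

/-- All elements of the normal closure of `{a}` commute pairwise, provided `a`
commutes with all its conjugates. -/
lemma aux_comm {G : Type*} [Group G] (a : G)
    (h : ∀ g : G, ⁅a, g * a * g⁻¹⁆ = 1) :
    ∀ y ∈ Subgroup.normalClosure {a}, ∀ z ∈ Subgroup.normalClosure {a}, Commute y z := by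
  have hconj : ∀ g : G, Commute a (g * a * g⁻¹) := by
    intro g
    exact commutatorElement_eq_one_iff_commute.mp (h g)
  have hcc : ∀ g hh : G, Commute (g * a * g⁻¹) (hh * a * hh⁻¹) := by
    intro g hh
    have := (hconj (g⁻¹ * hh)).map (MulAut.conj g).toMonoidHom
    simpa [MulAut.conj_apply, mul_assoc] using this
  intro y hy z hz
  have key : ∀ u ∈ Group.conjugatesOfSet ({a} : Set G), ∀ v ∈ Group.conjugatesOfSet ({a} : Set G),
      Commute u v := by
    intro u hu v hv
    rw [Group.mem_conjugatesOfSet_iff] at hu hv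
    obtain ⟨b, hb, hbc⟩ := hu
    obtain ⟨b', hb', hbc'⟩ := hv
    rw [Set.mem_singleton_iff] at hb hb'
    subst hb; subst hb'
    obtain ⟨c, rfl⟩ := isConj_iff.mp hbc
    obtain ⟨c', rfl⟩ := isConj_iff.mp hbc'
    exact hcc c c'
  rw [show (Subgroup.normalClosure ({a}:Set G)) = Subgroup.closure (Group.conjugatesOfSet {a}) from rfl] at hy hz
  induction hy, hz using Subgroup.closure_induction₂ with
  | mem u v hu hv => exact key u hu v hv
  | one_left => exact Commute.one_left _
  | one_right => exact Commute.one_right _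
  | mul_left _ _ _ _ _ _ h1 h2 => exact h1.mul_left h2
  | mul_right _ _ _ _ _ _ h1 h2 => exact h1.mul_right h2
  | inv_left _ _ _ _ h1 => exact h1.inv_left
  | inv_right _ _ _ _ h1 => exact h1.inv_right

/-- Key induction: a group normally generated by `k` elements each of which commutes with
all of its conjugates has nilpotency class at most `k`. -/
lemma aux_main : ∀ (k : ℕ) (G : Type u) [Group G] (x : Fin k → G),
    Subgroup.normalClosure (Set.range x) = ⊤ →
    (∀ (i : Fin k) (g : G), ⁅x i, g * x i * g⁻¹⁆ = 1) →
    Subgroup.lowerCentralSeries (⊤ : Subgroup G) k = ⊥ := by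
  intro k
  induction k with
  | zero =>
    intro G _ x hgen _
    have h1 : Set.range x = ∅ := by
      simp [Set.range_eq_empty]
    rw [h1] at hgen
    have h2 : (⊤ : Subgroup G) ≤ ⊥ := by
      rw [← hgen]
      exact Subgroup.normalClosure_le_normal (by simp)
    simpa using le_antisymm (by simpa using h2) bot_le
  | succ k ih =>
    intro G _ x hgen hrel
    -- Step 1: lcs G k ≤ N i := Subgroup.normalClosure {x i} for every i
    have hstep : ∀ i : Fin (k+1), Subgroup.lowerCentralSeries (⊤ : Subgroup G) k ≤ Subgroup.normalClosure {x i} := by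
      intro i
      set N := Subgroup.normalClosure ({x i} : Set G) with hN
      let π := QuotientGroup.mk' N
      have hπ : Function.Surjective π := QuotientGroup.mk'_surjective N
      set x' : Fin k → G ⧸ N := fun j => π (x (i.succAbove j)) with hx'
      have hgen' : Subgroup.normalClosure (Set.range x') = ⊤ := by
        have hmap : Subgroup.map π (Subgroup.normalClosure (Set.range x)) = ⊤ := by
          rw [hgen]
          simpa using MonoidHom.range_eq_map π ▸ (MonoidHom.range_eq_top_of_surjective π hπ)
        rw [Subgroup.map_normalClosure _ _ hπ] at hmap
        rw [eq_top_iff, ← hmap]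
        apply Subgroup.normalClosure_le_normal
        rintro _ ⟨_, ⟨j, rfl⟩, rfl⟩
        by_cases hj : j = i
        · subst hj
          have : π (x j) = 1 := by
            rw [QuotientGroup.mk'_apply, QuotientGroup.eq_one_iff]
            exact Subgroup.subset_normalClosure (Set.mem_singleton _)
          rw [this]; exact one_mem _
        · obtain ⟨j', rfl⟩ := Fin.exists_succAbove_eq hj
          exact Subgroup.subset_normalClosure ⟨j', rfl⟩
      have hrel' : ∀ (j : Fin k) (g : G ⧸ N), ⁅x' j, g * x' j * g⁻¹⁆ = 1 := by
        intro j g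
        obtain ⟨g₀, rfl⟩ := hπ g
        have := congrArg π (hrel (i.succAbove j) g₀)
        rw [map_commutatorElement, map_mul, map_mul, map_inv, map_one] at this; exact this
      have hq := ih (G ⧸ N) x' hgen' hrel'
      intro a ha
      have : π a ∈ Subgroup.lowerCentralSeries (⊤ : Subgroup (G ⧸ N)) k :=
        Subgroup.lowerCentralSeries.map π k (Subgroup.mem_map_of_mem π ha)
      rw [hq, Subgroup.mem_bot] at this
      rwa [QuotientGroup.mk'_apply, QuotientGroup.eq_one_iff] at this
    -- Step 2: lcs G k ≤ center G
    have hcent : Subgroup.lowerCentralSeries (⊤ : Subgroup G) k ≤ Subgroup.center G := by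
      have htop : (⊤ : Subgroup G) ≤ Subgroup.centralizer (Subgroup.lowerCentralSeries (⊤ : Subgroup G) k : Set G) := by
        rw [← hgen, show Subgroup.normalClosure (Set.range x) = Subgroup.closure (Group.conjugatesOfSet (Set.range x)) from rfl, Subgroup.closure_le]
        intro u hu
        rw [Group.mem_conjugatesOfSet_iff] at hu
        obtain ⟨b, ⟨j, rfl⟩, hbc⟩ := hu
        obtain ⟨c, hu'⟩ := isConj_iff.mp hbc
        rw [SetLike.mem_coe, Subgroup.mem_centralizer_iff]
        intro h hh
        have h1 : h ∈ Subgroup.normalClosure ({x j} : Set G) := hstep j (by rwa [show Subgroup.closure (Group.conjugatesOfSet (Set.range x)) = ⊤ from hgen] at hh)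
        have h2 : u ∈ Subgroup.normalClosure ({x j} : Set G) := by
          rw [← hu']
          exact Subgroup.normalClosure_normal.conj_mem _ (Subgroup.subset_normalClosure (Set.mem_singleton _)) c
        exact (aux_comm (x j) (hrel j) u h2 h h1).symm
      intro a ha
      rw [Subgroup.mem_center_iff]
      intro g
      have := htop (Subgroup.mem_top g)
      rw [Subgroup.mem_centralizer_iff] at this
      exact (this a ha).symm
    exact Subgroup.lowerCentralSeries_succ_eq_bot ⊤ hcent

/-- If `G` is normally generated by `x 1, …, x k`, then the reduced group
`RG = G / ⟪[xᵢ, g xᵢ g⁻¹]⟫` is nilpotent of class at most `k`, i.e. the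
`(k+1)`-st term of its lower central series (namely `lowerCentralSeries _ k`,
since `lowerCentralSeries _ 0 = ⊤`) is trivial. -/
theorem stmt2 (k : ℕ) (G : Type*) [Group G] (x : Fin k → G)
    (hgen : Subgroup.normalClosure (Set.range x) = ⊤) :
    Subgroup.lowerCentralSeries (⊤ : Subgroup
      (G ⧸ Subgroup.normalClosure
        {w : G | ∃ (i : Fin k) (g : G), w = ⁅x i, g * x i * g⁻¹⁆})) k = ⊥ := by
  set N := Subgroup.normalClosure {w : G | ∃ (i : Fin k) (g : G), w = ⁅x i, g * x i * g⁻¹⁆}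
  let π := QuotientGroup.mk' N
  have hπ : Function.Surjective π := QuotientGroup.mk'_surjective N
  apply aux_main k (G ⧸ N) (fun i => π (x i))
  · have hmap : Subgroup.map π (Subgroup.normalClosure (Set.range x)) = ⊤ := by
      rw [hgen]
      simpa using MonoidHom.range_eq_map π ▸ (MonoidHom.range_eq_top_of_surjective π hπ)
    rw [Subgroup.map_normalClosure _ _ hπ] at hmap
    rw [eq_top_iff, ← hmap]
    apply Subgroup.normalClosure_le_normal
    rintro _ ⟨_, ⟨j, rfl⟩, rfl⟩
    exact Subgroup.subset_normalClosure ⟨j, rfl⟩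
  · intro i g
    obtain ⟨g₀, rfl⟩ := hπ g
    have : (⁅x i, g₀ * x i * g₀⁻¹⁆ : G) ∈ N := Subgroup.subset_normalClosure ⟨i, g₀, rfl⟩
    have h2 : π ⁅x i, g₀ * x i * g₀⁻¹⁆ = 1 := by
      rw [QuotientGroup.mk'_apply, QuotientGroup.eq_one_iff]; exact this
    rw [map_commutatorElement, map_mul, map_mul, map_inv] at h2; exact h2
end

section
/- Let G be the reduced free group RF_n. Every conjugating endomorphism of G is an automorphism; that is, End_C(RF_n) = Aut_C(RF_n), where a conjugating endomorphism is an endomorphism sending each generator x_i to a conjugate of x_i. -/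
open scoped commutatorElement

open Subgroup

section Identities
variable {G : Type*} [Group G]

lemma comm_mul_left' (u c w : G) : ⁅u*c, w⁆ = u * ⁅c,w⁆ * u⁻¹ * ⁅u,w⁆ := by
  simp only [commutatorElement_def]; group

lemma comm_mul_right' (c v t : G) : ⁅c, v*t⁆ = ⁅c,v⁆ * (v * ⁅c,t⁆ * v⁻¹) := by
  simp only [commutatorElement_def]; group

/-- General three subgroups lemma. -/
lemma threeSubgroups (H K L : Subgroup G) [H.Normal] [K.Normal] [L.Normal] :
    ⁅⁅H,K⁆,L⁆ ≤ ⁅⁅K,L⁆,H⁆ ⊔ ⁅⁅L,H⁆,K⁆ := by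
  set N : Subgroup G := ⁅⁅K,L⁆,H⁆ ⊔ ⁅⁅L,H⁆,K⁆ with hN
  let π := QuotientGroup.mk' N
  have hk : ∀ (A : Subgroup G), A ≤ N → Subgroup.map π A = ⊥ := fun A hA =>
    (Subgroup.map_eq_bot_iff _).mpr (by rwa [QuotientGroup.ker_mk'])
  have h1 : ⁅⁅Subgroup.map π K, Subgroup.map π L⁆, Subgroup.map π H⁆ = ⊥ := by
    rw [← Subgroup.map_commutator, ← Subgroup.map_commutator]
    exact hk _ le_sup_left
  have h2 : ⁅⁅Subgroup.map π L, Subgroup.map π H⁆, Subgroup.map π K⁆ = ⊥ := by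
    rw [← Subgroup.map_commutator, ← Subgroup.map_commutator]
    exact hk _ le_sup_right
  have h3 := Subgroup.commutator_commutator_eq_bot_of_rotate h1 h2
  rw [← Subgroup.map_commutator, ← Subgroup.map_commutator, Subgroup.map_eq_bot_iff,
    QuotientGroup.ker_mk'] at h3
  exact h3

lemma lcs_comm_le (G : Type*) [Group G] :
    ∀ (n m : ℕ), ⁅Subgroup.lowerCentralSeries (⊤ : Subgroup G) m, Subgroup.lowerCentralSeries (⊤ : Subgroup G) n⁆ ≤ Subgroup.lowerCentralSeries (⊤ : Subgroup G) (m + n + 1)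
  | 0, m => by
      rw [Subgroup.lowerCentralSeries_zero]
      exact le_of_eq rfl
  | (n+1), m => by
      have step : Subgroup.lowerCentralSeries (⊤ : Subgroup G) (n+1) = ⁅Subgroup.lowerCentralSeries (⊤ : Subgroup G) n, ⊤⁆ := rfl
      rw [step, Subgroup.commutator_comm]
      refine le_trans (threeSubgroups (Subgroup.lowerCentralSeries (⊤ : Subgroup G) n) ⊤ (Subgroup.lowerCentralSeries (⊤ : Subgroup G) m)) ?_
      apply sup_le
      · rw [Subgroup.commutator_comm (⊤ : Subgroup G) (Subgroup.lowerCentralSeries (⊤ : Subgroup G) m)]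
        have e1 : ⁅Subgroup.lowerCentralSeries (⊤ : Subgroup G) m, (⊤ : Subgroup G)⁆ = Subgroup.lowerCentralSeries (⊤ : Subgroup G) (m+1) := rfl
        rw [e1]
        exact le_trans (lcs_comm_le G n (m+1)) (Subgroup.lowerCentralSeries_antitone ⊤ (by omega))
      · refine le_trans (Subgroup.commutator_mono (lcs_comm_le G n m) le_rfl) ?_
        have e2 : ⁅Subgroup.lowerCentralSeries (⊤ : Subgroup G) (m+n+1), (⊤ : Subgroup G)⁆ = Subgroup.lowerCentralSeries (⊤ : Subgroup G) (m+n+2) := rfl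
        rw [e2]
        exact Subgroup.lowerCentralSeries_antitone ⊤ (by omega)

end Identities
open Subgroup

universe u

lemma comm_mul_central_left {G : Type*} [Group G] (a b z : G)
    (hz : ∀ g, z * g = g * z) : ⁅a * z, b⁆ = ⁅a, b⁆ := by
  calc ⁅a * z, b⁆ = a * (z * b) * z⁻¹ * a⁻¹ * b⁻¹ := by
        simp [commutatorElement_def, mul_inv_rev, mul_assoc]
    _ = a * (b * z) * z⁻¹ * a⁻¹ * b⁻¹ := by rw [hz b]
    _ = ⁅a, b⁆ := by simp [commutatorElement_def, mul_assoc]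

lemma comm_mul_central_right {G : Type*} [Group G] (a b z : G)
    (hz : ∀ g, z * g = g * z) : ⁅a, b * z⁆ = ⁅a, b⁆ := by
  rw [← commutatorElement_inv, comm_mul_central_left b a z hz, commutatorElement_inv]

/-- In a nilpotent group, a subgroup which together with the commutator subgroup
generates the whole group must be the whole group. -/
lemma eq_top_of_sup_commutator :
    ∀ (m : ℕ) {G : Type u} [Group G] (H : Subgroup G),
      Subgroup.upperCentralSeries G m = ⊤ → H ⊔ commutator G = ⊤ → H = ⊤ := by
  intro m
  induction m with
  | zero =>
    intro G _ H hup _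
    rw [Subgroup.upperCentralSeries_zero] at hup
    rw [eq_top_iff]
    intro g _
    have hg : g ∈ (⊥ : Subgroup G) := by rw [hup]; trivial
    rw [Subgroup.mem_bot] at hg
    rw [hg]
    exact H.one_mem
  | succ m ih =>
    intro G _ H hup hsup
    set π := QuotientGroup.mk' (Subgroup.center G) with hπdef
    have hπ : Function.Surjective π := QuotientGroup.mk'_surjective _
    have hup' : Subgroup.upperCentralSeries (G ⧸ Subgroup.center G) m = ⊤ := by
      have hc := Subgroup.comap_upperCentralSeries_quotient_center (G := G) m
      rw [hup] at hc
      rw [eq_top_iff]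
      rintro q -
      obtain ⟨g, rfl⟩ := hπ q
      have : g ∈ Subgroup.comap π (Subgroup.upperCentralSeries (G ⧸ Subgroup.center G) m) := by
        rw [hc]; trivial
      exact this
    have hsup' : Subgroup.map π H ⊔ commutator (G ⧸ Subgroup.center G) = ⊤ := by
      have hcm : commutator (G ⧸ Subgroup.center G) = Subgroup.map π (commutator G) := by
        rw [commutator_def, commutator_def, Subgroup.map_commutator,
          Subgroup.map_top_of_surjective π hπ]
      rw [hcm, ← Subgroup.map_sup, hsup, Subgroup.map_top_of_surjective π hπ]
    have hHtop := ih (Subgroup.map π H) hup' hsup'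
    have hHZ : H ⊔ Subgroup.center G = ⊤ := by
      have h2 := congrArg (Subgroup.comap π) hHtop
      rwa [Subgroup.comap_map_eq, QuotientGroup.ker_mk', Subgroup.comap_top] at h2
    have hcomm_le : commutator G ≤ H := by
      rw [_root_.commutator_def]
      refine Subgroup.commutator_le.mpr ?_
      intro g₁ _ g₂ _
      have hmem : ∀ g : G, ∃ h ∈ H, ∃ z ∈ Subgroup.center G, h * z = g := by
        intro g
        have : g ∈ (↑(H ⊔ Subgroup.center G) : Set G) := by
          rw [hHZ]; trivial
        rw [Subgroup.mul_normal] at this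
        exact this
      obtain ⟨h₁, hh₁, z₁, hz₁, rfl⟩ := hmem g₁
      obtain ⟨h₂, hh₂, z₂, hz₂, rfl⟩ := hmem g₂
      rw [Subgroup.mem_center_iff] at hz₁ hz₂
      rw [comm_mul_central_left h₁ (h₂ * z₂) z₁ (fun g => (hz₁ g).symm),
        comm_mul_central_right h₁ h₂ z₂ (fun g => (hz₂ g).symm)]
      rw [commutatorElement_def]
      exact H.mul_mem (H.mul_mem (H.mul_mem hh₁ hh₂) (H.inv_mem hh₁)) (H.inv_mem hh₂)
    rw [eq_top_iff, ← hsup]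
    exact sup_le le_rfl hcomm_le

/-- An endomorphism which is the identity modulo the commutator subgroup moves
each element of `Subgroup.lowerCentralSeries (⊤ : Subgroup G) k` by an element of `Subgroup.lowerCentralSeries (⊤ : Subgroup G) (k+1)`. -/
lemma endo_fix_lcs {G : Type u} [Group G] (φ : G →* G)
    (h : ∀ g : G, φ g * g⁻¹ ∈ Subgroup.lowerCentralSeries (⊤ : Subgroup G) 1) :
    ∀ k, ∀ g ∈ Subgroup.lowerCentralSeries (⊤ : Subgroup G) k, φ g * g⁻¹ ∈ Subgroup.lowerCentralSeries (⊤ : Subgroup G) (k + 1) := by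
  intro k
  induction k with
  | zero => exact fun g _ => h g
  | succ k ih =>
    set N := Subgroup.lowerCentralSeries (⊤ : Subgroup G) (k + 2) with hNdef
    set π := QuotientGroup.mk' N with hπdef
    have hπ : Function.Surjective π := QuotientGroup.mk'_surjective _
    have hker : ∀ y : G, y ∈ N ↔ π y = 1 := fun y => (QuotientGroup.eq_one_iff y).symm
    have hstep : Subgroup.lowerCentralSeries (⊤ : Subgroup G) (k+2) = ⁅Subgroup.lowerCentralSeries (⊤ : Subgroup G) (k+1), ⊤⁆ := rfl
    have hcent : ∀ m ∈ Subgroup.lowerCentralSeries (⊤ : Subgroup G) (k+1), ∀ q : G ⧸ N, Commute (π m) q := by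
      intro m hm q
      obtain ⟨g, rfl⟩ := hπ q
      rw [← commutatorElement_eq_one_iff_commute, ← map_commutatorElement]
      rw [← hker]
      rw [hNdef, hstep]
      exact Subgroup.commutator_mem_commutator hm (Subgroup.mem_top g)
    suffices hle : Subgroup.lowerCentralSeries (⊤ : Subgroup G) (k+1) ≤ MonoidHom.eqLocus (π.comp φ) π by
      intro g hg
      have heq : π (φ g) = π g := hle hg
      have h2 : (φ g)⁻¹ * g ∈ N := by
        rw [hπdef] at heq
        simp only [QuotientGroup.mk'_apply] at heq
        exact (QuotientGroup.eq (s := N)).mp heq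
      have h3 : g⁻¹ * φ g ∈ N := by
        have := N.inv_mem h2
        rwa [mul_inv_rev, inv_inv] at this
      have h4 := Subgroup.Normal.conj_mem inferInstance _ h3 g
      have h5 : g * (g⁻¹ * φ g) * g⁻¹ = φ g * g⁻¹ := by group
      rwa [h5] at h4
    show ⁅Subgroup.lowerCentralSeries (⊤ : Subgroup G) k, ⊤⁆ ≤ _
    refine Subgroup.commutator_le.mpr ?_
    intro c hc t _
    show π (φ ⁅c, t⁆) = π ⁅c, t⁆
    have hu := ih c hc
    have hv := h t
    have hφc : φ c = (φ c * c⁻¹) * c := by group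
    have hφt : φ t = (φ t * t⁻¹) * t := by group
    set u := φ c * c⁻¹ with hudef
    set v := φ t * t⁻¹ with hvdef
    have h1 : π ⁅u, v * t⁆ = 1 := by
      rw [← hker, hNdef, hstep]
      exact Subgroup.commutator_mem_commutator hu (Subgroup.mem_top _)
    have h2 : π ⁅c, v⁆ = 1 := by
      rw [← hker]
      have : ⁅c, v⁆ ∈ ⁅Subgroup.lowerCentralSeries (⊤ : Subgroup G) k, Subgroup.lowerCentralSeries (⊤ : Subgroup G) 1⁆ :=
        Subgroup.commutator_mem_commutator hc hv
      exact lcs_comm_le G 1 k this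
    have h3 := hcent ⁅c, t⁆ (Subgroup.commutator_mem_commutator hc (Subgroup.mem_top t))
    rw [map_commutatorElement, hφc, hφt, comm_mul_left', comm_mul_right']
    simp only [map_mul, map_inv, h1, h2, mul_one, one_mul]
    have e1 : π v * π ⁅c, t⁆ * (π v)⁻¹ = π ⁅c, t⁆ := by
      rw [← (h3 (π v)).eq, mul_assoc, mul_inv_cancel, mul_one]
    have e2 : π u * π ⁅c, t⁆ * (π u)⁻¹ = π ⁅c, t⁆ := by
      rw [← (h3 (π u)).eq, mul_assoc, mul_inv_cancel, mul_one]
    rw [e1, e2]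


/-- If a group is generated by at most `k` elements each of which commutes with
all of its conjugates, then it is nilpotent of class at most `k` (Milnor). -/
lemma nilpotent_of_conj_gen :
    ∀ (k : ℕ) {G : Type u} [Group G] (S : Set G), S.Finite → S.ncard ≤ k →
      Subgroup.closure S = ⊤ → (∀ a ∈ S, ∀ g : G, ⁅a, g * a * g⁻¹⁆ = 1) →
      Subgroup.lowerCentralSeries (⊤ : Subgroup G) k = ⊥ := by
  intro k
  induction k with
  | zero =>
    intro G _ S hfin hcard hcl _
    have hS : S = ∅ := (Set.ncard_eq_zero hfin).mp (Nat.le_zero.mp hcard)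
    rw [hS, Subgroup.closure_empty] at hcl
    rw [Subgroup.lowerCentralSeries_zero, ← hcl]
  | succ k ih =>
    intro G _ S hfin hcard hcl hcomm
    by_cases hS : S = ∅
    · rw [hS, Subgroup.closure_empty] at hcl
      exact le_bot_iff.mp (le_of_le_of_eq le_top hcl.symm)
    · have key : ∀ a ∈ S, Subgroup.lowerCentralSeries (⊤ : Subgroup G) k ≤ Subgroup.normalClosure {a} := by
        intro a ha
        set N := Subgroup.normalClosure ({a} : Set G) with hNdef
        set π := QuotientGroup.mk' N with hπdef
        have hπ : Function.Surjective π := QuotientGroup.mk'_surjective N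
        have hS' : Subgroup.closure (π '' (S \ {a})) = ⊤ := by
          rw [eq_top_iff, ← Subgroup.map_top_of_surjective π hπ, ← hcl,
            MonoidHom.map_closure]
          refine (Subgroup.closure_le _).mpr ?_
          rintro y ⟨b, hb, rfl⟩
          by_cases hba : b = a
          · subst hba
            have : π b = 1 := (QuotientGroup.eq_one_iff b).mpr
              (Subgroup.subset_normalClosure rfl)
            rw [this]
            exact Subgroup.one_mem _
          · exact Subgroup.subset_closure ⟨b, ⟨hb, hba⟩, rfl⟩
        have hcomm' : ∀ y ∈ π '' (S \ {a}), ∀ q : G ⧸ N, ⁅y, q * y * q⁻¹⁆ = 1 := by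
          rintro y ⟨b, ⟨hb, -⟩, rfl⟩ q
          obtain ⟨g, rfl⟩ := hπ q
          rw [← map_inv, ← map_mul, ← map_mul, ← map_commutatorElement,
            hcomm b hb g, map_one]
        have hfin' : (π '' (S \ {a})).Finite := hfin.sdiff.image _
        have hcard' : (π '' (S \ {a})).ncard ≤ k := by
          have h1 : (⇑π '' (S \ {a})).ncard ≤ (S \ {a}).ncard :=
            Set.ncard_image_le hfin.sdiff
          have h2 : (S \ {a}).ncard < S.ncard :=
            Set.ncard_diff_singleton_lt_of_mem ha hfin
          omega
        have hlcsq := ih (π '' (S \ {a})) hfin' hcard' hS' hcomm'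
        intro c hc
        have hmc : π c ∈ Subgroup.lowerCentralSeries (⊤ : Subgroup (G ⧸ N)) k :=
          Subgroup.lowerCentralSeries.map π k (Subgroup.mem_map_of_mem π hc)
        rw [hlcsq, Subgroup.mem_bot] at hmc
        exact (QuotientGroup.eq_one_iff c).mp hmc
      have hcen : ∀ c ∈ Subgroup.lowerCentralSeries (⊤ : Subgroup G) k, ∀ g : G, ⁅c, g⁆ = 1 := by
        intro c hc
        have hcommS : ∀ a ∈ S, a * c = c * a := by
          intro a ha
          have hle : Subgroup.normalClosure ({a} : Set G) ≤
              Subgroup.centralizer {a} := by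
            refine (Subgroup.closure_le _).mpr ?_
            rintro y hy
            rw [Group.mem_conjugatesOfSet_iff] at hy
            obtain ⟨b, hb, hconj⟩ := hy
            rw [Set.mem_singleton_iff] at hb
            rw [hb] at hconj
            obtain ⟨g, hg⟩ := isConj_iff.mp hconj
            rw [SetLike.mem_coe, Subgroup.mem_centralizer_iff]
            rintro z hz
            rw [Set.mem_singleton_iff] at hz
            rw [hz]
            have h1 := hcomm a ha g
            rw [commutatorElement_eq_one_iff_mul_comm] at h1
            rw [← hg]
            exact h1
          have := hle (key a ha hc)
          rw [Subgroup.mem_centralizer_iff] at this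
          exact this a rfl
        intro g
        have htop : (⊤ : Subgroup G) ≤ Subgroup.centralizer {c} := by
          rw [← hcl]
          refine (Subgroup.closure_le _).mpr ?_
          intro a ha
          rw [SetLike.mem_coe, Subgroup.mem_centralizer_iff]
          rintro z hz
          rw [Set.mem_singleton_iff] at hz
          subst hz
          exact (hcommS a ha).symm
        have hg := htop (Subgroup.mem_top g)
        rw [Subgroup.mem_centralizer_iff] at hg
        rw [commutatorElement_eq_one_iff_mul_comm]
        exact hg c rfl
      refine le_bot_iff.mp ?_
      have : Subgroup.lowerCentralSeries (⊤ : Subgroup G) (k+1) = ⁅Subgroup.lowerCentralSeries (⊤ : Subgroup G) k, ⊤⁆ := rfl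
      rw [this]
      refine Subgroup.commutator_le.mpr ?_
      intro c hc g _
      rw [Subgroup.mem_bot]
      exact hcen c hc g

/-- The defining relators of the reduced free group: commutators of a generator
with any conjugate of itself. -/
def RFrel (n : ℕ) : Set (FreeGroup (Fin n)) :=
  {w | ∃ (i : Fin n) (g : FreeGroup (Fin n)),
    w = ⁅FreeGroup.of i, g * FreeGroup.of i * g⁻¹⁆}

/-- The reduced free group on `n` generators. -/
def RF (n : ℕ) : Type := FreeGroup (Fin n) ⧸ Subgroup.normalClosure (RFrel n)

instance (n : ℕ) : Group (RF n) := QuotientGroup.Quotient.group _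

/-- The image of the `i`-th generator in the reduced free group. -/
def x {n : ℕ} (i : Fin n) : RF n := QuotientGroup.mk (FreeGroup.of i)

/-- Every conjugating endomorphism of the reduced free group is an automorphism:
`End_C(RF_n) = Aut_C(RF_n)`. -/
theorem stmt3 (n : ℕ) (φ : RF n →* RF n)
    (hconj : ∀ i : Fin n, ∃ w : RF n, φ (x i) = w⁻¹ * x i * w) :
    Function.Bijective φ := by
  classical
  set π : FreeGroup (Fin n) →* RF n :=
    QuotientGroup.mk' (Subgroup.normalClosure (RFrel n)) with hπdef
  have hπ : Function.Surjective π := QuotientGroup.mk'_surjective _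
  have hx_gen : Subgroup.closure (Set.range (x (n := n))) = ⊤ := by
    have himg : Set.range (x (n := n)) = ⇑π '' Set.range FreeGroup.of := by
      rw [← Set.range_comp]; rfl
    rw [himg, ← MonoidHom.map_closure, FreeGroup.closure_range_of,
      Subgroup.map_top_of_surjective π hπ]
  have hx_rel : ∀ a ∈ Set.range (x (n := n)), ∀ g : RF n, ⁅a, g * a * g⁻¹⁆ = 1 := by
    rintro a ⟨i, rfl⟩ g
    obtain ⟨h, rfl⟩ := hπ g
    have hxi : x i = π (FreeGroup.of i) := rfl
    rw [hxi, ← map_inv, ← map_mul, ← map_mul, ← map_commutatorElement]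
    exact (QuotientGroup.eq_one_iff _).mpr (Subgroup.subset_normalClosure ⟨i, h, rfl⟩)
  have hcard : (Set.range (x (n := n))).ncard ≤ n := by
    rw [← Set.image_univ]
    have h2 := Set.ncard_image_le (s := (Set.univ : Set (Fin n))) (f := x) Set.finite_univ
    simpa [Set.ncard_univ, Nat.card_eq_fintype_card] using h2
  have hlcs : Subgroup.lowerCentralSeries (⊤ : Subgroup (RF n)) n = ⊥ :=
    nilpotent_of_conj_gen n (Set.range x) (Set.finite_range x) hcard hx_gen hx_rel
  have hnil : Group.IsNilpotent (RF n) := Subgroup.nilpotent_iff_lowerCentralSeries.mpr ⟨n, hlcs⟩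
  obtain ⟨m, hm⟩ := hnil.nilpotent'
  have hsurj : Function.Surjective φ := by
    have hrange : φ.range ⊔ commutator (RF n) = ⊤ := by
      rw [eq_top_iff, ← hx_gen]
      refine (Subgroup.closure_le _).mpr ?_
      rintro a ⟨i, rfl⟩
      obtain ⟨w, hw⟩ := hconj i
      have hx_eq : x i = ⁅x i, w⁻¹⁆ * φ (x i) := by
        rw [hw, commutatorElement_def]; group
      rw [SetLike.mem_coe, hx_eq]
      refine Subgroup.mul_mem _ (Subgroup.mem_sup_right ?_) (Subgroup.mem_sup_left ⟨x i, rfl⟩)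
      rw [_root_.commutator_def]
      exact Subgroup.commutator_mem_commutator (Subgroup.mem_top _) (Subgroup.mem_top _)
    exact MonoidHom.range_eq_top.mp (eq_top_of_sup_commutator m φ.range hm hrange)
  have hbase : ∀ g : RF n, φ g * g⁻¹ ∈ Subgroup.lowerCentralSeries (⊤ : Subgroup (RF n)) 1 := by
    set ψ : RF n →* RF n ⧸ commutator (RF n) :=
      QuotientGroup.mk' (commutator (RF n)) with hψdef
    have hle : (⊤ : Subgroup (RF n)) ≤ MonoidHom.eqLocus (ψ.comp φ) ψ := by
      rw [← hx_gen]
      refine (Subgroup.closure_le _).mpr ?_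
      rintro a ⟨i, rfl⟩
      show ψ (φ (x i)) = ψ (x i)
      obtain ⟨w, hw⟩ := hconj i
      rw [hw]
      have hmem : (w⁻¹ * x i * w)⁻¹ * x i ∈ commutator (RF n) := by
        have hcm : (w⁻¹ * x i * w)⁻¹ * x i = ⁅w⁻¹, (x i)⁻¹⁆ := by
          rw [commutatorElement_def]; group
        rw [hcm, commutator_def]
        exact Subgroup.commutator_mem_commutator (Subgroup.mem_top _) (Subgroup.mem_top _)
      exact (QuotientGroup.eq (s := commutator (RF n))).mpr hmem
    intro g
    have heq : ψ (φ g) = ψ g := hle (Subgroup.mem_top g)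
    have h2 : (φ g)⁻¹ * g ∈ commutator (RF n) :=
      (QuotientGroup.eq (s := commutator (RF n))).mp heq
    have h3 : g⁻¹ * φ g ∈ commutator (RF n) := by
      have := (commutator (RF n)).inv_mem h2
      rwa [mul_inv_rev, inv_inv] at this
    have h4 := Subgroup.Normal.conj_mem inferInstance _ h3 g
    have h5 : g * (g⁻¹ * φ g) * g⁻¹ = φ g * g⁻¹ := by group
    rw [Subgroup.top_lowerCentralSeries_one]
    rwa [h5] at h4
  have hfix := endo_fix_lcs φ hbase
  have hinj : Function.Injective φ := by
    refine (injective_iff_map_eq_one φ).mpr ?_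
    intro a ha
    have hmem : ∀ k, a ∈ Subgroup.lowerCentralSeries (⊤ : Subgroup (RF n)) k := by
      intro k
      induction k with
      | zero => exact Subgroup.mem_top a
      | succ k ihk =>
        have hk := hfix k a ihk
        rw [ha, one_mul] at hk
        exact (Subgroup.inv_mem_iff _).mp hk
    have hb := hmem n
    rw [hlcs, Subgroup.mem_bot] at hb
    exact hb
  exact ⟨hinj, hsurj⟩
end

section
/- In the reduced free group RF_n, for a fixed index j let RF_{n-1}^{(j)} be the subgroup generated by the x_k with k ≠ j. If λ, λ' ∈ RF_{n-1}^{(j)} satisfy λ⁻¹ x_j λ = λ'⁻¹ x_j λ', then λ = λ'. (Uniqueness of the conjugating element lying in the subgroup omitting x_j.) -/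
open scoped commutatorElement

namespace RFproof

attribute [local instance] Classical.decEq

variable {n : ℕ}

abbrev MA (n : ℕ) := MonoidAlgebra ℤ (FreeMonoid (Fin n))

noncomputable instance : CoeFun (MA n) (fun _ => FreeMonoid (Fin n) → ℤ) := ⟨fun f => f.coeff⟩

def dupSupp (f : MA n) : Prop := ∀ w : FreeMonoid (Fin n), (FreeMonoid.toList w).Nodup → f w = 0

lemma dupSupp_zero : dupSupp (0 : MA n) := fun _ _ => rfl

lemma dupSupp.mul_right {f : MA n} (hf : dupSupp f) (g : MA n) : dupSupp (f * g) := by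
  intro w hw
  rw [MonoidAlgebra.mul_apply, Finsupp.sum]
  apply Finset.sum_eq_zero; intro a _
  rw [Finsupp.sum]
  apply Finset.sum_eq_zero; intro b _
  split
  · rename_i hab
    have ha : (FreeMonoid.toList a).Sublist (FreeMonoid.toList w) := by
      rw [← hab, FreeMonoid.toList_mul]; exact List.sublist_append_left _ _
    rw [hf a (ha.nodup hw), zero_mul]
  · rfl

lemma dupSupp.mul_left {f : MA n} (hf : dupSupp f) (g : MA n) : dupSupp (g * f) := by
  intro w hw
  rw [MonoidAlgebra.mul_apply, Finsupp.sum]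
  apply Finset.sum_eq_zero; intro a _
  rw [Finsupp.sum]
  apply Finset.sum_eq_zero; intro b _
  split
  · rename_i hab
    have hb : (FreeMonoid.toList b).Sublist (FreeMonoid.toList w) := by
      rw [← hab, FreeMonoid.toList_mul]; exact List.sublist_append_right _ _
    rw [hf b (hb.nodup hw), mul_zero]
  · rfl

lemma dupSupp.add {f g : MA n} (hf : dupSupp f) (hg : dupSupp g) : dupSupp (f + g) := by
  intro w hw; rw [MonoidAlgebra.coeff_add, Finsupp.add_apply, hf w hw, hg w hw, add_zero]

lemma dupSupp.neg {f : MA n} (hf : dupSupp f) : dupSupp (-f) := by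
  intro w hw; rw [MonoidAlgebra.coeff_neg, Finsupp.neg_apply, hf w hw, neg_zero]

def redCon (n : ℕ) : RingCon (MA n) where
  r f g := dupSupp (f - g)
  iseqv := by
    constructor
    · intro f; simpa using dupSupp_zero
    · intro f g h; simpa using h.neg
    · intro f g h h1 h2; have := h1.add h2; simpa using this
  add' := by
    intro a b c d h1 h2
    show dupSupp _
    have := (h1 : dupSupp _).add (h2 : dupSupp _)
    have e : a + c - (b + d) = a - b + (c - d) := by abel
    rwa [e]
  mul' := by
    intro a b c d h1 h2
    show dupSupp _
    have e : a * c - b * d = (a - b) * c + b * (c - d) := by noncomm_ring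
    rw [e]; exact ((h1 : dupSupp _).mul_right c).add ((h2 : dupSupp _).mul_left b)

abbrev RR (n : ℕ) := (redCon n).Quotient

noncomputable def rmk : MA n →+* RR n := (redCon n).mk'

lemma rmk_surjective : Function.Surjective (rmk (n := n)) := fun x => Quotient.exists_rep x

lemma rmk_eq_iff {f g : MA n} : rmk f = rmk g ↔ dupSupp (f - g) := by
  constructor
  · intro h; exact Quotient.eq''.mp h
  · intro h; exact Quotient.sound' h

lemma rmk_eq_zero_iff {f : MA n} : rmk f = 0 ↔ dupSupp f := by
  have h0 : (0 : RR n) = rmk 0 := rfl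
  rw [h0, rmk_eq_iff]
  constructor
  · intro h; simpa using h
  · intro h; simpa using h


lemma dupSupp_def {f : MA n} :
    dupSupp f ↔ ∀ w : FreeMonoid (Fin n), (FreeMonoid.toList w).Nodup → f w = 0 :=
  Iff.rfl


/-- generator images in the reduced ring -/
noncomputable def X (i : Fin n) : RR n := rmk (MonoidAlgebra.single (FreeMonoid.of i) 1)

lemma Xsq (i : Fin n) : X i * X i = 0 := by
  rw [X, ← map_mul, MonoidAlgebra.single_mul_single, rmk_eq_zero_iff, dupSupp_def]
  intro w hw
  rw [MonoidAlgebra.coeff_single, Finsupp.single_apply]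
  split
  · rename_i h
    exfalso
    rw [← h, FreeMonoid.toList_mul, FreeMonoid.toList_of] at hw
    simp at hw
  · rfl

lemma sandwich (i : Fin n) (r : RR n) : X i * r * X i = 0 := by
  obtain ⟨f, rfl⟩ := rmk_surjective r
  rw [X, ← map_mul, ← map_mul, rmk_eq_zero_iff, dupSupp_def]
  intro w hw
  by_cases hsupp : w ∈ (MonoidAlgebra.single (FreeMonoid.of i) (1:ℤ) * f *
      MonoidAlgebra.single (FreeMonoid.of i) (1:ℤ)).coeff.support
  · exfalso
    have h1 := MonoidAlgebra.support_coeff_mul_subset (MonoidAlgebra.single (FreeMonoid.of i) (1:ℤ) * f)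
      (MonoidAlgebra.single (FreeMonoid.of i) (1:ℤ)) hsupp
    rw [Finset.mem_mul] at h1
    obtain ⟨u, hu, v, hv, huv⟩ := h1
    have h2 := MonoidAlgebra.support_coeff_mul_subset (MonoidAlgebra.single (FreeMonoid.of i) (1:ℤ)) f hu
    rw [Finset.mem_mul] at h2
    obtain ⟨a, ha, b, hb, hab⟩ := h2
    have ha' : a = FreeMonoid.of i := by
      have := Finsupp.support_single_subset ha; simpa using this
    have hv' : v = FreeMonoid.of i := by
      have := Finsupp.support_single_subset hv; simpa using this
    rw [← huv, ← hab, ha', hv'] at hw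
    rw [FreeMonoid.toList_mul, FreeMonoid.toList_mul, FreeMonoid.toList_of] at hw
    rw [List.nodup_append] at hw
    have := hw.2.2
    simp [List.Disjoint] at this
  · exact Finsupp.notMem_support_iff.mp hsupp

/-- the Magnus units -/
noncomputable def xunit (i : Fin n) : (RR n)ˣ where
  val := 1 + X i
  inv := 1 - X i
  val_inv := by
    rw [add_mul, one_mul, mul_sub, mul_one, Xsq, sub_zero]; abel
  inv_val := by
    rw [sub_mul, one_mul, mul_add, mul_one, Xsq, add_zero]; abel

lemma commute_one_add (i : Fin n) (r s : RR n) :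
    Commute (1 + X i) (1 + r * X i * s) := by
  have h1 : X i * (r * X i * s) = 0 := by
    have : X i * (r * X i * s) = (X i * r * X i) * s := by noncomm_ring
    rw [this, sandwich, zero_mul]
  have h2 : (r * X i * s) * X i = 0 := by
    have : (r * X i * s) * X i = r * (X i * s * X i) := by noncomm_ring
    rw [this, sandwich, mul_zero]
  unfold Commute SemiconjBy
  simp only [mul_add, add_mul, mul_one, one_mul, h1, h2, add_zero]
  abel

noncomputable def μ : FreeGroup (Fin n) →* (RR n)ˣ := FreeGroup.lift xunit

lemma μ_commute_relator (i : Fin n) (U : (RR n)ˣ) :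
    Commute (xunit i) (U * xunit i * U⁻¹) := by
  have hB : (U : RR n) * ((1:RR n) + X i) * (↑U⁻¹ : RR n)
      = 1 + (U : RR n) * X i * (↑U⁻¹ : RR n) := by
    rw [mul_add, mul_one, add_mul, Units.mul_inv]
  have h := commute_one_add i (U : RR n) ((↑U⁻¹ : RR n))
  have hx : ((xunit i : (RR n)ˣ) : RR n) = 1 + X i := rfl
  apply Units.ext
  simp only [Units.val_mul, hx, hB]
  exact h.eq


noncomputable def μbar : RF n →* (RR n)ˣ :=
  QuotientGroup.lift _ μ (by
    refine Subgroup.normalClosure_le_normal ?_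
    rintro w ⟨i, g, rfl⟩
    rw [SetLike.mem_coe, MonoidHom.mem_ker, map_commutatorElement,
      commutatorElement_eq_one_iff_commute]
    have : μ (g * FreeGroup.of i * g⁻¹) = μ g * xunit i * (μ g)⁻¹ := by
      rw [map_mul, map_mul, map_inv]
      simp [μ, FreeGroup.lift_apply_of]
    rw [this]
    have h2 : μ (n := n) (FreeGroup.of i) = xunit i := by simp [μ, FreeGroup.lift_apply_of]
    rw [h2]
    exact μ_commute_relator i (μ g))

def mkRF : FreeGroup (Fin n) →* RF n := QuotientGroup.mk' _

lemma mkRF_surjective : Function.Surjective (mkRF (n := n)) :=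
  QuotientGroup.mk'_surjective _

lemma mkRF_of (i : Fin n) : mkRF (FreeGroup.of i) = x i := rfl

lemma μbar_x (i : Fin n) : μbar (x i) = xunit i := by
  show μbar (mkRF (FreeGroup.of i)) = xunit i
  show μ (FreeGroup.of i) = xunit i
  simp [μ, FreeGroup.lift_apply_of]

/-- basic relation: a generator commutes with all of its conjugates -/
lemma xconj_comm (i : Fin n) (g : RF n) : Commute (x i) (g * x i * g⁻¹) := by
  obtain ⟨f, rfl⟩ := mkRF_surjective g
  rw [← commutatorElement_eq_one_iff_commute]
  have : (⁅x i, mkRF f * x i * (mkRF f)⁻¹⁆ : RF n)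
      = mkRF ⁅FreeGroup.of i, f * FreeGroup.of i * f⁻¹⁆ := by
    rw [map_commutatorElement, map_mul, map_mul, map_inv, mkRF_of]
  rw [this]
  show (QuotientGroup.mk _ : FreeGroup (Fin n) ⧸ Subgroup.normalClosure (RFrel n)) = 1
  rw [QuotientGroup.eq_one_iff]
  exact Subgroup.subset_normalClosure ⟨i, f, rfl⟩

/-- any two conjugates of the same generator commute -/
lemma conj_conj_comm (i : Fin n) (g h : RF n) :
    Commute (g * x i * g⁻¹) (h * x i * h⁻¹) := by
  have h1 := (xconj_comm i (g⁻¹ * h)).map (MulAut.conj g)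
  have e1 : (MulAut.conj g) (x i) = g * x i * g⁻¹ := by
    simp [MulAut.conj]
  have e2 : (MulAut.conj g) (g⁻¹ * h * x i * (g⁻¹ * h)⁻¹) = h * x i * h⁻¹ := by
    simp [MulAut.conj]; group
  rwa [e1, e2] at h1

/-- the normal closure of a generator -/
def Ncl (i : Fin n) : Subgroup (RF n) := Subgroup.normalClosure {x i}

instance Ncl_normal (i : Fin n) : (Ncl i).Normal := Subgroup.normalClosure_normal

lemma conj_mem_Ncl (i : Fin n) (g : RF n) : g * x i * g⁻¹ ∈ Ncl i :=
  (Ncl_normal i).conj_mem _ (Subgroup.subset_normalClosure rfl) g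

lemma x_mem_Ncl (i : Fin n) : x i ∈ Ncl i := Subgroup.subset_normalClosure rfl

lemma Ncl_comm (i : Fin n) : ∀ a ∈ Ncl i, ∀ b ∈ Ncl i, Commute a b := by
  intro a ha b hb
  have key : ∀ u ∈ Group.conjugatesOfSet {x i}, ∀ v ∈ Group.conjugatesOfSet {x i},
      Commute u v := by
    intro u hu v hv
    rw [Group.mem_conjugatesOfSet_iff] at hu hv
    obtain ⟨a', ha', hc⟩ := hu
    obtain ⟨b', hb', hc'⟩ := hv
    rw [Set.mem_singleton_iff] at ha' hb'
    subst ha'; subst hb'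
    rw [isConj_iff] at hc hc'
    obtain ⟨c, hc⟩ := hc
    obtain ⟨c', hc'⟩ := hc'
    rw [← hc, ← hc']
    exact conj_conj_comm i c c'
  have ha' : a ∈ Subgroup.closure (Group.conjugatesOfSet {x i}) := ha
  have hb' : b ∈ Subgroup.closure (Group.conjugatesOfSet {x i}) := hb
  clear ha hb
  induction ha', hb' using Subgroup.closure_induction₂ with
  | mem u v hu hv => exact key u hu v hv
  | one_left v _ => exact Commute.one_left v
  | one_right u _ => exact Commute.one_right u
  | mul_left u v w _ _ _ h1 h2 => exact h1.mul_left h2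
  | mul_right u v w _ _ _ h1 h2 => exact h1.mul_right h2
  | inv_left u v _ _ h1 => exact h1.inv_left
  | inv_right u v _ _ h1 => exact h1.inv_right

/-- the commutator map m ↦ [m, W] is a homomorphism on the abelian normal
subgroup Ncl k -/
lemma comm_hom (k : Fin n) (W : RF n) {m m' : RF n}
    (hm : m ∈ Ncl k) (hm' : m' ∈ Ncl k) :
    ⁅m * m', W⁆ = ⁅m, W⁆ * ⁅m', W⁆ := by
  have hWm : W * m'⁻¹ * W⁻¹ ∈ Ncl k := (Ncl_normal k).conj_mem _ (by simpa using hm') W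
  have hcm' : ⁅m', W⁆ ∈ Ncl k := by
    have : (⁅m', W⁆ : RF n) = m' * (W * m'⁻¹ * W⁻¹) := by group
    rw [this]; exact mul_mem hm' hWm
  have hcomm : Commute m ⁅m', W⁆ := Ncl_comm k m hm _ hcm'
  calc ⁅m * m', W⁆ = m * ⁅m', W⁆ * m⁻¹ * ⁅m, W⁆ := by group
    _ = ⁅m', W⁆ * (m * m⁻¹) * ⁅m, W⁆ := by rw [hcomm.eq]; group
    _ = ⁅m, W⁆ * ⁅m', W⁆ := by
        rw [mul_inv_cancel]
        rw [mul_one]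
        exact (Ncl_comm k _ hcm' _ (by
          have : (⁅m, W⁆ : RF n) = m * (W * m⁻¹ * W⁻¹) := by group
          rw [this]
          exact mul_mem hm ((Ncl_normal k).conj_mem _ (by simpa using hm) W))).eq


/-! ### word products and the key expansion identities -/

def pp (w : List (Fin n)) : RF n := (w.map x).prod

def wp (L : List (Fin n × Bool)) : RF n :=
  (L.map fun p => cond p.2 (x p.1) (x p.1)⁻¹).prod

lemma pp_append (w₁ w₂ : List (Fin n)) : pp (w₁ ++ w₂) = pp w₁ * pp w₂ := by
  simp [pp]

lemma pp_cons (k : Fin n) (w : List (Fin n)) : pp (k :: w) = x k * pp w := by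
  simp [pp]

lemma wp_append (L₁ L₂ : List (Fin n × Bool)) : wp (L₁ ++ L₂) = wp L₁ * wp L₂ := by
  simp [wp]

lemma wp_cons (p : Fin n × Bool) (L : List (Fin n × Bool)) :
    wp (p :: L) = (cond p.2 (x p.1) (x p.1)⁻¹) * wp L := by
  simp [wp]

/-- conjugate of the generator `x i` by `v` -/
def dlt (i : Fin n) (v : RF n) : RF n := v * x i * v⁻¹

lemma dlt_mem_Ncl (i : Fin n) (v : RF n) : dlt i v ∈ Ncl i := conj_mem_Ncl i v

lemma comm_inv (k : Fin n) (W : RF n) {a : RF n} (ha : a ∈ Ncl k) :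
    ⁅a⁻¹, W⁆ = ⁅a, W⁆⁻¹ := by
  have h := comm_hom k W ha (inv_mem ha)
  rw [mul_inv_cancel] at h
  have h1 : (⁅(1 : RF n), W⁆ : RF n) = 1 := by group
  rw [h1] at h
  exact (inv_eq_of_mul_eq_one_right h.symm).symm

lemma conj_comm_expand (i : Fin n) (p s a : RF n) :
    p * ⁅a, s * x i * s⁻¹⁆ * p⁻¹ = dlt i (p * a * s) * (dlt i (p * s))⁻¹ := by
  unfold dlt; group

/-- E1: splitting a product of two elements of `Ncl k` inside the conjugator -/
lemma dlt_split (i k : Fin n) (p s : RF n) {a b : RF n}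
    (ha : a ∈ Ncl k) (hb : b ∈ Ncl k) :
    dlt i (p * (a * b) * s) =
      (dlt i (p * a * s) * (dlt i (p * s))⁻¹) *
        ((dlt i (p * b * s) * (dlt i (p * s))⁻¹) * dlt i (p * s)) := by
  have hW : dlt i (p * (a * b) * s) = p * ⁅a * b, s * x i * s⁻¹⁆ * p⁻¹ * dlt i (p * s) := by
    unfold dlt; group
  rw [hW, comm_hom k (s * x i * s⁻¹) ha hb]
  have : p * (⁅a, s * x i * s⁻¹⁆ * ⁅b, s * x i * s⁻¹⁆) * p⁻¹
      = (p * ⁅a, s * x i * s⁻¹⁆ * p⁻¹) * (p * ⁅b, s * x i * s⁻¹⁆ * p⁻¹) := by group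
  rw [this, conj_comm_expand, conj_comm_expand]
  group

/-- E2: removing an inverse inside the conjugator -/
lemma dlt_inv (i k : Fin n) (p s : RF n) {a : RF n} (ha : a ∈ Ncl k) :
    dlt i (p * a⁻¹ * s) =
      (dlt i (p * a * s) * (dlt i (p * s))⁻¹)⁻¹ * dlt i (p * s) := by
  have hW : dlt i (p * a⁻¹ * s) = p * ⁅a⁻¹, s * x i * s⁻¹⁆ * p⁻¹ * dlt i (p * s) := by
    unfold dlt; group
  rw [hW, comm_inv k _ ha]
  have : p * (⁅a, s * x i * s⁻¹⁆)⁻¹ * p⁻¹ = (p * ⁅a, s * x i * s⁻¹⁆ * p⁻¹)⁻¹ := by group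
  rw [this, conj_comm_expand]


/-! ### the span of conjugates by duplicate-free positive words -/

def Lam (i : Fin n) (S : Finset (Fin n)) : Subgroup (RF n) :=
  Subgroup.closure {g | ∃ w : List (Fin n), w.Nodup ∧ (∀ k ∈ w, k ∈ S) ∧ g = dlt i (pp w)}

lemma exists_dup_split {α : Type*} [DecidableEq α] :
    ∀ (P : List α), ¬ P.Nodup → ∃ (p : List α) (k : α) (q r : List α), P = p ++ k :: (q ++ k :: r) := by
  intro P
  induction P with
  | nil => intro h; simp at h
  | cons a t ih =>
    intro h
    by_cases hat : a ∈ t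
    · obtain ⟨q, r, rfl⟩ := List.append_of_mem hat
      exact ⟨[], a, q, r, by simp⟩
    · have ht : ¬ t.Nodup := fun hn => h (List.nodup_cons.mpr ⟨hat, hn⟩)
      obtain ⟨p, k, q, r, rfl⟩ := ih ht
      exact ⟨a :: p, k, q, r, rfl⟩

lemma genB (i : Fin n) (S : Finset (Fin n)) :
    ∀ (N : ℕ) (P : List (Fin n)), P.length ≤ N → (∀ k ∈ P, k ∈ S) →
      dlt i (pp P) ∈ Lam i S := by
  intro N
  induction N with
  | zero =>
    intro P hlen hS
    have : P = [] := by cases P <;> simp_all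
    subst this
    exact Subgroup.subset_closure ⟨[], by simp, by simp, rfl⟩
  | succ N ih =>
    intro P hlen hS
    by_cases hnd : P.Nodup
    · exact Subgroup.subset_closure ⟨P, hnd, hS, rfl⟩
    · obtain ⟨p, k, q, r, rfl⟩ := exists_dup_split P hnd
      have hkS : k ∈ S := hS k (by simp)
      have e0 : pp (p ++ k :: (q ++ k :: r))
          = pp p * (x k * (pp q * x k * (pp q)⁻¹)) * (pp q * pp r) := by
        simp only [pp_append, pp_cons]; group
      have hsplit := dlt_split i k (pp p) (pp q * pp r)
        (x_mem_Ncl k) (conj_mem_Ncl k (pp q))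
      rw [e0, hsplit]
      have e1 : pp p * x k * (pp q * pp r) = pp (p ++ k :: (q ++ r)) := by
        simp only [pp_append, pp_cons]; group
      have e2 : pp p * (pp q * x k * (pp q)⁻¹) * (pp q * pp r)
          = pp (p ++ (q ++ k :: r)) := by
        simp only [pp_append, pp_cons]; group
      have e3 : pp p * (pp q * pp r) = pp (p ++ (q ++ r)) := by
        simp only [pp_append, pp_cons]
      rw [e1, e2, e3]
      have m1 : dlt i (pp (p ++ k :: (q ++ r))) ∈ Lam i S := by
        apply ih
        · simp only [List.length_append, List.length_cons] at hlen ⊢; omega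
        · intro k' hk'; apply hS; simp at hk' ⊢; tauto
      have m2 : dlt i (pp (p ++ (q ++ k :: r))) ∈ Lam i S := by
        apply ih
        · simp only [List.length_append, List.length_cons] at hlen ⊢; omega
        · intro k' hk'; apply hS; simp at hk' ⊢; tauto
      have m3 : dlt i (pp (p ++ (q ++ r))) ∈ Lam i S := by
        apply ih
        · simp only [List.length_append, List.length_cons] at hlen ⊢; omega
        · intro k' hk'; apply hS; simp at hk' ⊢; tauto
      exact mul_mem (mul_mem m1 (inv_mem m3)) (mul_mem (mul_mem m2 (inv_mem m3)) m3)

lemma wp_pos (L : List (Fin n × Bool)) (hpos : ∀ p ∈ L, p.2 = true) :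
    wp L = pp (L.map Prod.fst) := by
  induction L with
  | nil => rfl
  | cons a t ih =>
    rw [wp_cons, List.map_cons, pp_cons, hpos a (by simp), ih (fun p hp => hpos p (by simp [hp]))]
    rfl

lemma genA (i : Fin n) (S : Finset (Fin n)) :
    ∀ (c : ℕ) (L : List (Fin n × Bool)), (L.countP fun p => !p.2) = c →
      (∀ p ∈ L, p.1 ∈ S) → dlt i (wp L) ∈ Lam i S := by
  intro c
  induction c with
  | zero =>
    intro L hc hS
    have hpos : ∀ p ∈ L, p.2 = true := by
      intro p hp
      have := (List.countP_eq_zero.mp hc) p hp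
      simpa using this
    rw [wp_pos L hpos]
    apply genB i S (L.map Prod.fst).length _ le_rfl
    intro k hk
    rw [List.mem_map] at hk
    obtain ⟨p, hp, hpk⟩ := hk
    rw [← hpk]
    exact hS p hp
  | succ c ih =>
    intro L hc hS
    have hex : ∃ p ∈ L, p.2 = false := by
      have : 0 < L.countP fun p => !p.2 := by omega
      obtain ⟨p, hp, hp2⟩ := List.countP_pos_iff.mp this
      exact ⟨p, hp, by simpa using hp2⟩
    obtain ⟨⟨k, b⟩, hpL, hb⟩ := hex
    subst hb
    obtain ⟨L₁, L₂, rfl⟩ := List.append_of_mem hpL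
    have e0 : wp (L₁ ++ (k, false) :: L₂) = wp L₁ * (x k)⁻¹ * wp L₂ := by
      simp only [wp_append, wp_cons, Bool.cond_false]; group
    have hinv := dlt_inv i k (wp L₁) (wp L₂) (x_mem_Ncl k)
    rw [e0, hinv]
    have e1 : wp L₁ * x k * wp L₂ = wp (L₁ ++ (k, true) :: L₂) := by
      simp only [wp_append, wp_cons, Bool.cond_true]; group
    have e2 : wp L₁ * wp L₂ = wp (L₁ ++ L₂) := (wp_append L₁ L₂).symm
    rw [e1, e2]
    have hcount : (L₁ ++ (k, false) :: L₂).countP (fun p => !p.2)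
        = (L₁.countP fun p => !p.2) + (L₂.countP fun p => !p.2) + 1 := by
      simp [List.countP_append, List.countP_cons]
      omega
    have hsum : (L₁.countP fun p => !p.2) + (L₂.countP fun p => !p.2) = c := by
      rw [hcount] at hc; omega
    have hc1 : ((L₁ ++ (k, true) :: L₂).countP fun p => !p.2) = c := by
      rw [List.countP_append, List.countP_cons]
      simpa using hsum
    have hc2 : ((L₁ ++ L₂).countP fun p => !p.2) = c := by
      rw [List.countP_append]
      exact hsum
    have hS1 : ∀ p ∈ L₁ ++ (k, true) :: L₂, p.1 ∈ S := by
      intro p hp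
      simp at hp
      rcases hp with hp | hp | hp
      · exact hS p (by simp [hp])
      · rw [hp]; exact hS (k, false) (by simp)
      · exact hS p (by simp [hp])
    have hS2 : ∀ p ∈ L₁ ++ L₂, p.1 ∈ S := by
      intro p hp
      simp at hp
      rcases hp with hp | hp
      · exact hS p (by simp [hp])
      · exact hS p (by simp [hp])
    have m1 := ih _ hc1 hS1
    have m2 := ih _ hc2 hS2
    exact mul_mem (inv_mem (mul_mem m1 (inv_mem m2))) m2

def winv (L : List (Fin n × Bool)) : List (Fin n × Bool) :=
  L.reverse.map fun p => (p.1, !p.2)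

lemma wp_winv (L : List (Fin n × Bool)) : wp (winv L) = (wp L)⁻¹ := by
  induction L with
  | nil => simp [winv, wp]
  | cons a t ih =>
    have e : winv (a :: t) = winv t ++ [(a.1, !a.2)] := by simp [winv]
    rw [e, wp_append, ih, wp_cons]
    cases ha : a.2 <;> simp [wp, ha]

lemma exists_word (S : Finset (Fin n)) {v : RF n}
    (hv : v ∈ Subgroup.closure {g | ∃ k ∈ S, g = x k}) :
    ∃ L : List (Fin n × Bool), (∀ p ∈ L, p.1 ∈ S) ∧ v = wp L := by
  induction hv using Subgroup.closure_induction with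
  | mem g hg =>
    obtain ⟨k, hk, rfl⟩ := hg
    exact ⟨[(k, true)], by simp [hk], by simp [wp]⟩
  | one => exact ⟨[], by simp, rfl⟩
  | mul g h _ _ ihg ihh =>
    obtain ⟨L₁, h₁, rfl⟩ := ihg
    obtain ⟨L₂, h₂, rfl⟩ := ihh
    refine ⟨L₁ ++ L₂, ?_, (wp_append L₁ L₂).symm⟩
    intro p hp; simp at hp; rcases hp with hp | hp
    · exact h₁ p hp
    · exact h₂ p hp
  | inv g _ ihg =>
    obtain ⟨L, hL, rfl⟩ := ihg
    refine ⟨winv L, ?_, (wp_winv L).symm⟩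
    intro p hp
    rw [winv, List.mem_map] at hp
    obtain ⟨q, hq, rfl⟩ := hp
    exact hL q (List.mem_reverse.mp hq)

/-- GEN: every conjugate of `x i` by an element of the subgroup generated by
`x k`, `k ∈ S`, lies in the span of conjugates by duplicate-free words -/
lemma gen (i : Fin n) (S : Finset (Fin n)) {v : RF n}
    (hv : v ∈ Subgroup.closure {g | ∃ k ∈ S, g = x k}) :
    dlt i v ∈ Lam i S := by
  obtain ⟨L, hL, rfl⟩ := exists_word S hv
  exact genA i S _ L rfl hL


/-! ### deletion homomorphisms -/

/-- deleting the generator `x i` on the group side -/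
noncomputable def rho (i : Fin n) : RF n →* RF n :=
  QuotientGroup.lift _ (FreeGroup.lift (fun k => if k = i then 1 else x k)) (by
    refine Subgroup.normalClosure_le_normal ?_
    rintro w ⟨i', g, rfl⟩
    rw [SetLike.mem_coe, MonoidHom.mem_ker, map_commutatorElement,
      commutatorElement_eq_one_iff_commute]
    rw [map_mul, map_mul, map_inv, FreeGroup.lift_apply_of]
    set V := FreeGroup.lift (fun k => if k = i then 1 else x k) g
    by_cases hii : i' = i
    · simp [hii]
    · simp only [hii, if_false]
      exact xconj_comm i' V)

lemma rho_x (i k : Fin n) : rho i (x k) = if k = i then 1 else x k := by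
  show rho i (mkRF (FreeGroup.of k)) = _
  show FreeGroup.lift (fun k => if k = i then 1 else x k) (FreeGroup.of k) = _
  rw [FreeGroup.lift_apply_of]

/-- deleting a generator on the monoid algebra side -/
noncomputable def gDel (i : Fin n) : FreeMonoid (Fin n) →* MA n where
  toFun w := if i ∈ FreeMonoid.toList w then 0 else MonoidAlgebra.single w 1
  map_one' := by
    rw [if_neg]
    · exact (MonoidAlgebra.one_def).symm
    · simp [FreeMonoid.toList_one]
  map_mul' := by
    intro w₁ w₂
    by_cases h1 : i ∈ FreeMonoid.toList w₁
    · rw [if_pos, if_pos h1, zero_mul]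
      rw [FreeMonoid.toList_mul, List.mem_append]; left; exact h1
    · by_cases h2 : i ∈ FreeMonoid.toList w₂
      · rw [if_pos, if_neg h1, if_pos h2, mul_zero]
        rw [FreeMonoid.toList_mul, List.mem_append]; right; exact h2
      · rw [if_neg, if_neg h1, if_neg h2, MonoidAlgebra.single_mul_single, mul_one]
        rw [FreeMonoid.toList_mul, List.mem_append]
        rintro (h | h) <;> [exact h1 h; exact h2 h]

noncomputable def DelMA (i : Fin n) : MA n →+* MA n :=
  MonoidAlgebra.liftNCRingHom (Int.castRingHom (MA n)) (gDel i)
    (fun c y => Int.cast_commute c _)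

lemma DelMA_single (i : Fin n) (w : FreeMonoid (Fin n)) (c : ℤ) :
    DelMA i (MonoidAlgebra.single w c)
      = if i ∈ FreeMonoid.toList w then 0 else MonoidAlgebra.single w c := by
  show MonoidAlgebra.liftNC _ _ (MonoidAlgebra.single w c) = _
  rw [MonoidAlgebra.liftNC_single]
  show (c : MA n) * (gDel i w) = _
  show (c : MA n) * (if i ∈ FreeMonoid.toList w then 0 else MonoidAlgebra.single w 1) = _
  split
  · rw [mul_zero]
  · rw [MonoidAlgebra.intCast_def, MonoidAlgebra.single_mul_single, one_mul, mul_one,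
      Int.cast_id]

lemma DelMA_apply (i : Fin n) (f : MA n) (u : FreeMonoid (Fin n)) :
    (DelMA i f) u = if i ∈ FreeMonoid.toList u then 0 else f u := by
  induction f using MonoidAlgebra.induction with
  | zero => simp
  | single_add w c f hw hc ih =>
    rw [map_add, MonoidAlgebra.coeff_add, Finsupp.add_apply, ih]
    have hs : (DelMA i (MonoidAlgebra.single w c)) u
        = if i ∈ FreeMonoid.toList u then 0 else (Finsupp.single w c) u := by
      rw [DelMA_single]
      by_cases hwi : i ∈ FreeMonoid.toList w
      · rw [if_pos hwi]
        by_cases hu : i ∈ FreeMonoid.toList u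
        · rw [if_pos hu]; rfl
        · rw [if_neg hu]
          show (0 : ℤ) = _
          rw [Finsupp.single_apply, if_neg]
          intro hwu; rw [hwu] at hwi; exact hu hwi
      · rw [if_neg hwi]
        by_cases hu : i ∈ FreeMonoid.toList u
        · rw [if_pos hu]
          show (Finsupp.single w c) u = 0
          rw [Finsupp.single_apply, if_neg]
          intro hwu; rw [hwu] at hwi; exact hwi hu
        · rw [if_neg hu]; rfl
    rw [hs]
    by_cases hu : i ∈ FreeMonoid.toList u <;> simp [hu, Finsupp.add_apply]

lemma DelMA_dupSupp (i : Fin n) {f : MA n} (hf : dupSupp f) : dupSupp (DelMA i f) := by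
  intro w hw
  rw [DelMA_apply]
  split
  · rfl
  · exact hf w hw

/-- deleting a generator on the reduced ring -/
noncomputable def DelR (i : Fin n) : RR n →+* RR n where
  toFun := Quotient.lift (fun f => rmk (DelMA i f)) (by
    intro f g hfg
    apply rmk_eq_iff.mpr
    rw [← map_sub]
    exact DelMA_dupSupp i (hfg : dupSupp (f - g)))
  map_one' := by
    show rmk (DelMA i 1) = 1
    rw [(DelMA i).map_one, rmk.map_one]
  map_mul' := by
    intro a b
    obtain ⟨f, rfl⟩ := rmk_surjective a
    obtain ⟨g, rfl⟩ := rmk_surjective b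
    show rmk (DelMA i (f * g)) = rmk (DelMA i f) * rmk (DelMA i g)
    rw [map_mul, map_mul]
  map_zero' := by
    show rmk (DelMA i 0) = 0
    rw [(DelMA i).map_zero, rmk.map_zero]
  map_add' := by
    intro a b
    obtain ⟨f, rfl⟩ := rmk_surjective a
    obtain ⟨g, rfl⟩ := rmk_surjective b
    show rmk (DelMA i (f + g)) = rmk (DelMA i f) + rmk (DelMA i g)
    rw [map_add, map_add]

lemma DelR_rmk (i : Fin n) (f : MA n) : DelR i (rmk f) = rmk (DelMA i f) := rfl

lemma DelR_X (i k : Fin n) : DelR i (X k) = if k = i then 0 else X k := by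
  by_cases hk : k = i
  · have hyi : i ∈ FreeMonoid.toList (FreeMonoid.of k) := by
      simp [FreeMonoid.toList_of, hk]
    rw [X, DelR_rmk, DelMA_single, if_pos hyi, if_pos hk, map_zero]
  · have hni : i ∉ FreeMonoid.toList (FreeMonoid.of k) := by
      simp only [FreeMonoid.toList_of, List.mem_singleton]
      exact fun h => hk h.symm
    rw [X, DelR_rmk, DelMA_single, if_neg hni, if_neg hk]

/-- compatibility: deleting then Magnus = Magnus then deleting -/
lemma mu_rho (i : Fin n) :
    μbar.comp (rho i) = (Units.map (DelR i : RR n →+* RR n).toMonoidHom).comp μbar := by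
  apply QuotientGroup.monoidHom_ext
  apply FreeGroup.ext_hom
  intro k
  show μbar (rho i (x k)) = Units.map _ (μbar (x k))
  rw [rho_x, μbar_x]
  by_cases hk : k = i
  · rw [if_pos hk, map_one]
    apply Units.ext
    show (1 : RR n) = DelR i ((xunit k : (RR n)ˣ) : RR n)
    show (1 : RR n) = DelR i (1 + X k)
    rw [map_add, map_one, DelR_X, if_pos hk, add_zero]
  · rw [if_neg hk, μbar_x]
    apply Units.ext
    show ((xunit k : (RR n)ˣ) : RR n) = DelR i (1 + X k)
    rw [map_add, map_one, DelR_X, if_neg hk]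
    rfl


/-! ### decomposition c = m * rho c -/

def gens (S : Finset (Fin n)) : Set (RF n) := {g | ∃ k ∈ S, g = x k}

/-- conjugates of `x i` by elements of the subgroup generated by `S'` -/
def conjSet (i : Fin n) (S' : Finset (Fin n)) : Set (RF n) :=
  {g | ∃ v ∈ Subgroup.closure (gens S'), g = dlt i v}

lemma rho_maps_gens (i : Fin n) (S : Finset (Fin n)) {c : RF n}
    (hc : c ∈ Subgroup.closure (gens S)) :
    rho i c ∈ Subgroup.closure (gens (S.erase i)) := by
  induction hc using Subgroup.closure_induction with
  | mem g hg =>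
    obtain ⟨k, hk, rfl⟩ := hg
    rw [rho_x]
    by_cases hki : k = i
    · rw [if_pos hki]; exact one_mem _
    · rw [if_neg hki]
      exact Subgroup.subset_closure ⟨k, Finset.mem_erase.mpr ⟨hki, hk⟩, rfl⟩
  | one => rw [map_one]; exact one_mem _
  | mul g h _ _ ihg ihh => rw [map_mul]; exact mul_mem ihg ihh
  | inv g _ ihg => rw [map_inv]; exact inv_mem ihg

lemma rho_fixes (i : Fin n) (S' : Finset (Fin n)) (hiS : i ∉ S') {v : RF n}
    (hv : v ∈ Subgroup.closure (gens S')) : rho i v = v := by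
  induction hv using Subgroup.closure_induction with
  | mem g hg =>
    obtain ⟨k, hk, rfl⟩ := hg
    rw [rho_x, if_neg]
    intro hki; rw [hki] at hk; exact hiS hk
  | one => rw [map_one]
  | mul g h _ _ ihg ihh => rw [map_mul, ihg, ihh]
  | inv g _ ihg => rw [map_inv, ihg]

lemma conj_mem_conjClosure (i : Fin n) (S' : Finset (Fin n)) {u m : RF n}
    (hu : u ∈ Subgroup.closure (gens S'))
    (hm : m ∈ Subgroup.closure (conjSet i S')) :
    u * m * u⁻¹ ∈ Subgroup.closure (conjSet i S') := by
  induction hm using Subgroup.closure_induction with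
  | mem g hg =>
    obtain ⟨v, hv, rfl⟩ := hg
    apply Subgroup.subset_closure
    refine ⟨u * v, mul_mem hu hv, ?_⟩
    unfold dlt; group
  | one => simpa using one_mem _
  | mul g h _ _ ihg ihh =>
    have : u * (g * h) * u⁻¹ = (u * g * u⁻¹) * (u * h * u⁻¹) := by group
    rw [this]; exact mul_mem ihg ihh
  | inv g _ ihg =>
    have : u * g⁻¹ * u⁻¹ = (u * g * u⁻¹)⁻¹ := by group
    rw [this]; exact inv_mem ihg

lemma decomp (i : Fin n) (S : Finset (Fin n)) {c : RF n}
    (hc : c ∈ Subgroup.closure (gens S)) :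
    ∃ m ∈ Subgroup.closure (conjSet i (S.erase i)), c = m * rho i c := by
  induction hc using Subgroup.closure_induction with
  | mem g hg =>
    obtain ⟨k, hk, rfl⟩ := hg
    by_cases hki : k = i
    · refine ⟨x k, ?_, ?_⟩
      · apply Subgroup.subset_closure
        refine ⟨1, one_mem _, ?_⟩
        unfold dlt; rw [hki]; group
      · rw [rho_x, if_pos hki, mul_one]
    · exact ⟨1, one_mem _, by rw [rho_x, if_neg hki, one_mul]⟩
  | one => exact ⟨1, one_mem _, by rw [map_one, one_mul]⟩
  | mul g h hg hh ihg ihh =>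
    obtain ⟨m₁, hm₁, e₁⟩ := ihg
    obtain ⟨m₂, hm₂, e₂⟩ := ihh
    refine ⟨m₁ * (rho i g * m₂ * (rho i g)⁻¹), ?_, ?_⟩
    · exact mul_mem hm₁ (conj_mem_conjClosure i _ (rho_maps_gens i S hg) hm₂)
    · rw [map_mul]
      calc g * h = (m₁ * rho i g) * (m₂ * rho i h) := by rw [← e₁, ← e₂]
        _ = m₁ * (rho i g * m₂ * (rho i g)⁻¹) * (rho i g * rho i h) := by group
  | inv g hg ihg =>
    obtain ⟨m, hm, e⟩ := ihg
    refine ⟨(rho i g)⁻¹ * m⁻¹ * rho i g, ?_, ?_⟩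
    · have := conj_mem_conjClosure i _ (inv_mem (rho_maps_gens i S hg)) (inv_mem hm)
      simpa [inv_inv] using this
    · rw [map_inv]
      conv_lhs => rw [e]
      group


/-! ### commutative structure on the normal closure and finsupp representation -/

noncomputable instance NclCommGroup (i : Fin n) : CommGroup ↥(Ncl i) :=
  { (inferInstance : Group ↥(Ncl i)) with
    mul_comm := fun a b => Subtype.ext ((Ncl_comm i a a.2 b b.2).eq) }

noncomputable def dltN (i : Fin n) (w : List (Fin n)) : ↥(Ncl i) :=
  ⟨dlt i (pp w), dlt_mem_Ncl i _⟩

noncomputable def PhiN (i : Fin n) (e : List (Fin n) →₀ ℤ) : ↥(Ncl i) :=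
  Finsupp.prod e fun w k => dltN i w ^ k

lemma PhiN_add (i : Fin n) (e₁ e₂ : List (Fin n) →₀ ℤ) :
    PhiN i (e₁ + e₂) = PhiN i e₁ * PhiN i e₂ :=
  Finsupp.prod_add_index' (fun a => zpow_zero _) (fun a b₁ b₂ => zpow_add _ b₁ b₂)

lemma PhiN_zero (i : Fin n) : PhiN i 0 = 1 := Finsupp.prod_zero_index

lemma PhiN_neg (i : Fin n) (e : List (Fin n) →₀ ℤ) : PhiN i (-e) = (PhiN i e)⁻¹ := by
  have h : PhiN i e * PhiN i (-e) = 1 := by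
    rw [← PhiN_add, add_neg_cancel, PhiN_zero]
  exact (inv_eq_of_mul_eq_one_right h).symm

lemma lam_rep (i : Fin n) (S' : Finset (Fin n)) {m : RF n} (hm : m ∈ Lam i S') :
    ∃ e : (List (Fin n)) →₀ ℤ, (∀ w ∈ e.support, w.Nodup ∧ ∀ k ∈ w, k ∈ S') ∧
      m = ↑(PhiN i e) := by
  rw [Lam] at hm
  induction hm using Subgroup.closure_induction with
  | mem g hg =>
    obtain ⟨w, hnd, hS, rfl⟩ := hg
    refine ⟨Finsupp.single w 1, ?_, ?_⟩
    · intro w' hw'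
      have := Finsupp.support_single_subset hw'
      rw [Finset.mem_singleton] at this
      subst this; exact ⟨hnd, hS⟩
    · show dlt i (pp w) = ↑((Finsupp.single w (1:ℤ)).prod fun w k => dltN i w ^ k)
      rw [Finsupp.prod_single_index (by simp), zpow_one, dltN]
  | one => exact ⟨0, by simp, by rw [PhiN_zero]; rfl⟩
  | mul g h _ _ ihg ihh =>
    obtain ⟨e₁, h₁, rfl⟩ := ihg
    obtain ⟨e₂, h₂, rfl⟩ := ihh
    refine ⟨e₁ + e₂, ?_, ?_⟩
    · intro w hw
      have := Finsupp.support_add hw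
      rw [Finset.mem_union] at this
      rcases this with h | h
      · exact h₁ w h
      · exact h₂ w h
    · rw [PhiN_add]; rfl
  | inv g _ ihg =>
    obtain ⟨e, h₁, rfl⟩ := ihg
    refine ⟨-e, ?_, ?_⟩
    · intro w hw
      rw [Finsupp.support_neg] at hw
      exact h₁ w hw
    · rw [PhiN_neg]; rfl

/-! ### sum form of Magnus values on the normal closure -/

noncomputable def Bel (i : Fin n) (w : List (Fin n)) : RR n :=
  ((μbar (pp w) : (RR n)ˣ) : RR n) * X i * (((μbar (pp w))⁻¹ : (RR n)ˣ) : RR n)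

lemma Bel_mul_Bel (i : Fin n) (w w' : List (Fin n)) : Bel i w * Bel i w' = 0 := by
  unfold Bel
  have h := sandwich i ((((μbar (pp w))⁻¹ : (RR n)ˣ) : RR n) * ((μbar (pp w') : (RR n)ˣ) : RR n))
  calc ((μbar (pp w) : (RR n)ˣ) : RR n) * X i * (((μbar (pp w))⁻¹ : (RR n)ˣ) : RR n) *
        (((μbar (pp w') : (RR n)ˣ) : RR n) * X i * (((μbar (pp w'))⁻¹ : (RR n)ˣ) : RR n))
      = ((μbar (pp w) : (RR n)ˣ) : RR n) *
        (X i * ((((μbar (pp w))⁻¹ : (RR n)ˣ) : RR n) * ((μbar (pp w') : (RR n)ˣ) : RR n)) * X i) *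
        (((μbar (pp w'))⁻¹ : (RR n)ˣ) : RR n) := by noncomm_ring
    _ = 0 := by rw [h, mul_zero, zero_mul]

lemma val_μbar_dlt (i : Fin n) (w : List (Fin n)) :
    ((μbar (dlt i (pp w)) : (RR n)ˣ) : RR n) = 1 + Bel i w := by
  unfold dlt Bel
  rw [map_mul, map_mul, map_inv, μbar_x]
  rw [Units.val_mul, Units.val_mul]
  have hx : ((xunit i : (RR n)ˣ) : RR n) = 1 + X i := rfl
  rw [hx, mul_add, mul_one, add_mul, Units.mul_inv]

lemma smul_mul_smul_zero {a b : ℤ} {B B' : RR n} (hBB : B * B' = 0) :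
    (a • B) * (b • B') = 0 := by
  rw [zsmul_eq_mul, zsmul_eq_mul, mul_assoc, ← mul_assoc B, ← (Int.cast_commute b B).eq,
    mul_assoc, hBB]
  simp

lemma one_add_smul_mul (a b : ℤ) (B : RR n) (hB : B * B = 0) :
    (1 + a • B) * (1 + b • B) = 1 + (a + b) • B := by
  rw [mul_add, mul_one, add_mul, one_mul, smul_mul_smul_zero hB, add_zero, add_zsmul]
  abel

noncomputable def psiU (i : Fin n) (w : List (Fin n)) : Multiplicative ℤ →* (RR n)ˣ where
  toFun k :=
    { val := 1 + (Multiplicative.toAdd k) • Bel i w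
      inv := 1 + (-(Multiplicative.toAdd k)) • Bel i w
      val_inv := by
        rw [one_add_smul_mul _ _ _ (Bel_mul_Bel i w w), add_neg_cancel, zero_zsmul, add_zero]
      inv_val := by
        rw [one_add_smul_mul _ _ _ (Bel_mul_Bel i w w), neg_add_cancel, zero_zsmul, add_zero] }
  map_one' := by
    apply Units.ext
    show 1 + (Multiplicative.toAdd (1 : Multiplicative ℤ)) • Bel i w = 1
    simp
  map_mul' := by
    intro a b
    apply Units.ext
    show 1 + (Multiplicative.toAdd (a * b)) • Bel i w = _
    rw [Units.val_mul]
    show _ = (1 + (Multiplicative.toAdd a) • Bel i w) * (1 + (Multiplicative.toAdd b) • Bel i w)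
    rw [one_add_smul_mul _ _ _ (Bel_mul_Bel i w w)]
    rfl

lemma psiU_eq (i : Fin n) (w : List (Fin n)) :
    psiU i w = zpowersHom (RR n)ˣ (μbar (dlt i (pp w))) := by
  apply MonoidHom.ext_mint
  apply Units.ext
  show 1 + ((1:ℤ)) • Bel i w = ((μbar (dlt i (pp w)) ^ (1:ℤ) : (RR n)ˣ) : RR n)
  rw [one_zsmul, zpow_one, val_μbar_dlt]

lemma val_μbar_dlt_zpow (i : Fin n) (w : List (Fin n)) (k : ℤ) :
    ((μbar (dlt i (pp w)) ^ k : (RR n)ˣ) : RR n) = 1 + k • Bel i w := by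
  have h1 : μbar (dlt i (pp w)) ^ k
      = (zpowersHom (RR n)ˣ (μbar (dlt i (pp w)))) (Multiplicative.ofAdd k) := rfl
  rw [h1, ← psiU_eq]
  rfl

lemma sumform (i : Fin n) (e : List (Fin n) →₀ ℤ) :
    ((μbar ↑(PhiN i e) : (RR n)ˣ) : RR n) = 1 + e.sum fun w k => k • Bel i w := by
  induction e using Finsupp.induction with
  | zero =>
    rw [PhiN_zero, Finsupp.sum_zero_index, add_zero]
    have : ((1 : ↥(Ncl i)) : RF n) = 1 := rfl
    rw [this, map_one, Units.val_one]
  | single_add w c f hw hc ih =>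
    have hΦ : PhiN i (Finsupp.single w c + f) = dltN i w ^ c * PhiN i f := by
      rw [PhiN_add, PhiN, Finsupp.prod_single_index (by simp)]
    rw [hΦ]
    have hcoe : ((dltN i w ^ c * PhiN i f : ↥(Ncl i)) : RF n)
        = (dlt i (pp w)) ^ c * ((PhiN i f : ↥(Ncl i)) : RF n) := by
      push_cast
      rfl
    rw [hcoe, map_mul, Units.val_mul, map_zpow, val_μbar_dlt_zpow, ih]
    rw [Finsupp.sum_add_index' (fun a => by rw [zero_zsmul]) (fun a b₁ b₂ => add_zsmul _ b₁ b₂),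
      Finsupp.sum_single_index (by rw [zero_zsmul])]
    rw [mul_add, mul_one, add_mul, one_mul]
    have hz : (c • Bel i w) * (f.sum fun w' k => k • Bel i w') = 0 := by
      rw [Finsupp.sum, Finset.mul_sum]
      apply Finset.sum_eq_zero
      intro w' _
      exact smul_mul_smul_zero (Bel_mul_Bel i w w')
    rw [hz, add_zero]
    abel


/-! ### explicit representatives and coefficient extraction -/

noncomputable def fpr : List (Fin n) → MA n
  | [] => 1
  | l :: w => (1 + MonoidAlgebra.single (FreeMonoid.of l) 1) * fpr w

noncomputable def gpr : List (Fin n) → MA n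
  | [] => 1
  | l :: w => gpr w * (1 - MonoidAlgebra.single (FreeMonoid.of l) 1)

lemma val_μbar_pp (w : List (Fin n)) :
    ((μbar (pp w) : (RR n)ˣ) : RR n) = rmk (fpr w) ∧
      (((μbar (pp w))⁻¹ : (RR n)ˣ) : RR n) = rmk (gpr w) := by
  induction w with
  | nil =>
    constructor
    · show ((μbar (pp ([] : List (Fin n))) : (RR n)ˣ) : RR n) = rmk 1
      rw [pp]; simp
    · show (((μbar (pp ([] : List (Fin n))))⁻¹ : (RR n)ˣ) : RR n) = rmk 1
      rw [pp]; simp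
  | cons l w ih =>
    have hμ : μbar (pp (l :: w)) = xunit l * μbar (pp w) := by
      rw [pp_cons, map_mul, μbar_x]
    constructor
    · rw [hμ, Units.val_mul, ih.1]
      have hx : ((xunit l : (RR n)ˣ) : RR n) = 1 + X l := rfl
      rw [hx, fpr, map_mul, map_add, map_one]
      rfl
    · rw [hμ, mul_inv_rev, Units.val_mul, ih.2]
      have hx : (((xunit l)⁻¹ : (RR n)ˣ) : RR n) = 1 - X l := rfl
      rw [hx, gpr, map_mul, map_sub, map_one]
      rfl

lemma fpr_letters (w : List (Fin n)) :
    ∀ u ∈ (fpr w).coeff.support, ∀ l ∈ FreeMonoid.toList u, l ∈ w := by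
  induction w with
  | nil =>
    intro u hu l hl
    rw [fpr] at hu
    rw [MonoidAlgebra.one_def] at hu
    have := Finsupp.support_single_subset hu
    rw [Finset.mem_singleton] at this
    subst this
    rw [FreeMonoid.toList_one] at hl
    simp at hl
  | cons a w ih =>
    intro u hu l hl
    rw [fpr, add_mul, one_mul] at hu
    have := Finsupp.support_add hu
    rw [Finset.mem_union] at this
    rcases this with h | h
    · exact List.mem_cons_of_mem a (ih u h l hl)
    · have h2 := MonoidAlgebra.support_coeff_mul_subset _ _ h
      rw [Finset.mem_mul] at h2
      obtain ⟨p, hp, q, hq, hpq⟩ := h2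
      have hp' : p = FreeMonoid.of a := by
        have := Finsupp.support_single_subset hp; simpa using this
      subst hp'
      rw [← hpq, FreeMonoid.toList_mul, FreeMonoid.toList_of] at hl
      rcases List.mem_append.mp hl with h | h
      · rw [List.mem_singleton] at h
        subst h; simp
      · exact List.mem_cons_of_mem a (ih q hq l h)

lemma gpr_letters (w : List (Fin n)) :
    ∀ u ∈ (gpr w).coeff.support, ∀ l ∈ FreeMonoid.toList u, l ∈ w := by
  induction w with
  | nil =>
    intro u hu l hl
    rw [gpr] at hu
    rw [MonoidAlgebra.one_def] at hu
    have := Finsupp.support_single_subset hu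
    rw [Finset.mem_singleton] at this
    subst this
    rw [FreeMonoid.toList_one] at hl
    simp at hl
  | cons a w ih =>
    intro u hu l hl
    rw [gpr, mul_sub, mul_one] at hu
    have := Finsupp.support_sub hu
    rw [Finset.mem_union] at this
    rcases this with h | h
    · exact List.mem_cons_of_mem a (ih u h l hl)
    · have h2 := MonoidAlgebra.support_coeff_mul_subset _ _ h
      rw [Finset.mem_mul] at h2
      obtain ⟨p, hp, q, hq, hpq⟩ := h2
      have hq' : q = FreeMonoid.of a := by
        have := Finsupp.support_single_subset hq; simpa using this
      subst hq'
      rw [← hpq, FreeMonoid.toList_mul, FreeMonoid.toList_of] at hl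
      rcases List.mem_append.mp hl with h | h
      · exact List.mem_cons_of_mem a (ih p hp l h)
      · rw [List.mem_singleton] at h
        subst h; simp

lemma eps_mul (f g : MA n) : (f * g) 1 = f 1 * g 1 := by
  rw [MonoidAlgebra.mul_apply]
  have hinner : ∀ (a : FreeMonoid (Fin n)) (c₁ : ℤ),
      (Finsupp.sum g.coeff fun b c => if a * b = 1 then c₁ * c else 0)
        = if a = 1 then c₁ * g 1 else 0 := by
    intro a c₁
    by_cases ha : a = 1
    · subst ha
      rw [if_pos rfl, Finsupp.sum]
      rw [Finset.sum_eq_single (1 : FreeMonoid (Fin n))]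
      · rw [if_pos (one_mul _)]
      · intro b _ hb
        rw [if_neg]
        intro h1
        apply hb
        have h2 := congrArg FreeMonoid.toList h1
        rw [FreeMonoid.toList_mul, FreeMonoid.toList_one] at h2
        exact FreeMonoid.toList.injective
          (by rw [(List.append_eq_nil_iff.mp h2).2, FreeMonoid.toList_one])
      · intro h1
        rw [Finsupp.notMem_support_iff.mp h1, mul_zero, if_pos (one_mul _)]
    · rw [if_neg ha, Finsupp.sum]
      apply Finset.sum_eq_zero
      intro b _
      rw [if_neg]
      intro h1
      apply ha
      have h2 := congrArg FreeMonoid.toList h1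
      rw [FreeMonoid.toList_mul, FreeMonoid.toList_one] at h2
      exact FreeMonoid.toList.injective
        (by rw [(List.append_eq_nil_iff.mp h2).1, FreeMonoid.toList_one])
  simp only [hinner]
  rw [Finsupp.sum]
  rw [Finset.sum_eq_single (1 : FreeMonoid (Fin n))]
  · rw [if_pos rfl]
  · intro a _ ha
    rw [if_neg ha]
  · intro h1
    rw [Finsupp.notMem_support_iff.mp h1, if_pos rfl, zero_mul]

lemma gpr_eps (w : List (Fin n)) : gpr w 1 = 1 := by
  induction w with
  | nil =>
    rw [gpr, MonoidAlgebra.one_def, MonoidAlgebra.coeff_single, Finsupp.single_apply, if_pos rfl]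
  | cons a w ih =>
    rw [gpr, mul_sub, mul_one, MonoidAlgebra.coeff_sub, Finsupp.sub_apply, ih, eps_mul, ih]
    rw [MonoidAlgebra.coeff_single, Finsupp.single_apply, if_neg, mul_zero, sub_zero]
    intro h
    have := congrArg FreeMonoid.toList h
    rw [FreeMonoid.toList_of, FreeMonoid.toList_one] at this
    simp at this


lemma fpr_apply : ∀ (w : List (Fin n)), w.Nodup → ∀ (u : FreeMonoid (Fin n)),
    fpr w u = if (FreeMonoid.toList u).Sublist w then 1 else 0 := by
  intro w
  induction w with
  | nil =>
    intro _ u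
    rw [fpr, MonoidAlgebra.one_def, MonoidAlgebra.coeff_single, Finsupp.single_apply]
    by_cases hu : u = 1
    · subst hu
      rw [if_pos rfl, if_pos]
      rw [FreeMonoid.toList_one]
    · rw [if_neg (fun h => hu h.symm), if_neg]
      intro hsub
      apply hu
      have := List.sublist_nil.mp hsub
      exact FreeMonoid.toList.injective (by rw [this, FreeMonoid.toList_one])
  | cons a w ih =>
    intro hnd u
    have ha : a ∉ w := (List.nodup_cons.mp hnd).1
    have hw : w.Nodup := (List.nodup_cons.mp hnd).2
    rw [fpr, add_mul, one_mul, MonoidAlgebra.coeff_add, Finsupp.add_apply]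
    by_cases hcons : ∃ t : List (Fin n), FreeMonoid.toList u = a :: t
    · obtain ⟨t, ht⟩ := hcons
      have hu : u = FreeMonoid.of a * FreeMonoid.ofList t := by
        apply FreeMonoid.toList.injective
        rw [FreeMonoid.toList_mul, FreeMonoid.toList_of, FreeMonoid.toList_ofList, ht]
        rfl
      have h1 : (MonoidAlgebra.single (FreeMonoid.of a) (1:ℤ) * fpr w) u
          = fpr w (FreeMonoid.ofList t) := by
        rw [MonoidAlgebra.coeff_single_mul_eq_mul_coeff (x := fpr w)
          (m := FreeMonoid.of a) (m₁ := u) (FreeMonoid.ofList t), one_mul]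
        intro b _
        rw [hu]
        exact mul_right_inj _
      have h2 : fpr w u = 0 := by
        rw [ih hw u, if_neg]
        intro hsub
        apply ha
        apply hsub.subset
        rw [ht]
        simp
      rw [h1, h2, zero_add, ih hw (FreeMonoid.ofList t), FreeMonoid.toList_ofList, ht]
      exact if_congr (List.cons_sublist_cons).symm rfl rfl
    · have h1 : (MonoidAlgebra.single (FreeMonoid.of a) (1:ℤ) * fpr w) u = 0 := by
        by_cases hsup : u ∈ (MonoidAlgebra.single (FreeMonoid.of a) (1:ℤ) * fpr w).coeff.support
        · exfalso
          have h2 := MonoidAlgebra.support_coeff_mul_subset _ _ hsup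
          rw [Finset.mem_mul] at h2
          obtain ⟨p, hp, q, _, hpq⟩ := h2
          have hp' : p = FreeMonoid.of a := by
            have := Finsupp.support_single_subset hp; simpa using this
          subst hp'
          apply hcons
          refine ⟨FreeMonoid.toList q, ?_⟩
          rw [← hpq, FreeMonoid.toList_mul, FreeMonoid.toList_of]
          rfl
        · exact Finsupp.notMem_support_iff.mp hsup
      rw [h1, add_zero, ih hw u]
      apply if_congr _ rfl rfl
      rw [List.sublist_cons_iff]
      constructor
      · intro h; exact Or.inl h
      · rintro (h | ⟨r, hr, _⟩)
        · exact h
        · exact absurd ⟨r, hr⟩ hcons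

lemma list_tail_eq {α : Type*} (a b w' : List α) (i : α) (hib : i ∉ b)
    (h : a ++ i :: b = w' ++ [i]) : b = [] ∧ a = w' := by
  rcases List.eq_nil_or_concat b with rfl | ⟨L, lst, rfl⟩
  · exact ⟨rfl, List.append_cancel_right h⟩
  · exfalso
    have h2 : (a ++ i :: L) ++ [lst] = w' ++ [i] := by
      rw [← h]; simp
    rw [← List.concat_eq_append, ← List.concat_eq_append] at h2
    have := (List.concat_inj.mp h2).2
    subst this
    exact hib (by simp)

noncomputable def rep (i : Fin n) (w : List (Fin n)) : MA n :=
  fpr w * MonoidAlgebra.single (FreeMonoid.of i) 1 * gpr w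

lemma Bel_eq (i : Fin n) (w : List (Fin n)) : Bel i w = rmk (rep i w) := by
  rw [Bel, (val_μbar_pp w).1, (val_μbar_pp w).2, rep, X, ← map_mul, ← map_mul]

lemma rep_coeff (i : Fin n) (w w' : List (Fin n)) (hnd : w.Nodup) (hiw : i ∉ w)
    (hiw' : i ∉ w') :
    (rep i w) (FreeMonoid.ofList (w' ++ [i])) = if w'.Sublist w then 1 else 0 := by
  set u₀ := FreeMonoid.ofList (w' ++ [i]) with hu₀
  set F := fpr w * MonoidAlgebra.single (FreeMonoid.of i) (1:ℤ) with hF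
  set G' := gpr w - MonoidAlgebra.single 1 (1:ℤ) with hG'
  have hrep : rep i w = F * MonoidAlgebra.single 1 (1:ℤ) + F * G' := by
    have h0 : rep i w = F * gpr w := rfl
    rw [h0, hG', mul_sub]
    abel
  rw [hrep, MonoidAlgebra.coeff_add, Finsupp.add_apply]
  have hterm1 : (F * (MonoidAlgebra.single (1 : FreeMonoid (Fin n)) (1:ℤ) : MA n)) u₀
      = F u₀ := by
    rw [MonoidAlgebra.coeff_mul_single_eq_coeff_mul (x := F) (m := 1) (m₁ := u₀) u₀, mul_one]
    intro b _; rw [mul_one]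
  have hFu : F u₀ = if w'.Sublist w then 1 else 0 := by
    rw [hF, MonoidAlgebra.coeff_mul_single_eq_coeff_mul (x := fpr w)
      (m := FreeMonoid.of i) (m₁ := u₀) (FreeMonoid.ofList w'), mul_one]
    · rw [fpr_apply w hnd, FreeMonoid.toList_ofList]
    · intro b _
      constructor
      · intro hb
        apply FreeMonoid.toList.injective
        have := congrArg FreeMonoid.toList hb
        rw [FreeMonoid.toList_mul, FreeMonoid.toList_of, hu₀, FreeMonoid.toList_ofList] at this
        rw [FreeMonoid.toList_ofList]
        exact List.append_cancel_right this
      · intro hb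
        rw [hb]
        apply FreeMonoid.toList.injective
        rw [FreeMonoid.toList_mul, FreeMonoid.toList_of, hu₀, FreeMonoid.toList_ofList,
          FreeMonoid.toList_ofList]

  have hterm2 : (F * G') u₀ = 0 := by
    by_cases hsup : u₀ ∈ (F * G').coeff.support
    · exfalso
      have h2 := MonoidAlgebra.support_coeff_mul_subset _ _ hsup
      rw [Finset.mem_mul] at h2
      obtain ⟨p, hp, q, hq, hpq⟩ := h2
      have hpF := MonoidAlgebra.support_coeff_mul_subset _ _ (hF ▸ hp)
      rw [Finset.mem_mul] at hpF
      obtain ⟨p₁, hp₁, p₂, hp₂, hp₁₂⟩ := hpF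
      have hp₂' : p₂ = FreeMonoid.of i := by
        have := Finsupp.support_single_subset hp₂; simpa using this
      subst hp₂'
      -- q is in the support of G' : nonempty, i-free
      have hq1 : q ≠ 1 := by
        intro hq1
        subst hq1
        have : G' 1 = 0 := by
          rw [hG', MonoidAlgebra.coeff_sub, Finsupp.sub_apply, gpr_eps, MonoidAlgebra.coeff_single, Finsupp.single_apply, if_pos rfl, sub_self]
        exact Finsupp.notMem_support_iff.mpr this hq
      have hqg : q ∈ (gpr w).coeff.support := by
        have := Finsupp.support_sub (hG' ▸ hq)
        rw [Finset.mem_union] at this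
        rcases this with h | h
        · exact h
        · exfalso
          have := Finsupp.support_single_subset h
          rw [Finset.mem_singleton] at this
          exact hq1 this
      have hqi : i ∉ FreeMonoid.toList q := by
        intro hiq
        exact hiw (gpr_letters w q hqg i hiq)
      have hp₁i : i ∉ FreeMonoid.toList p₁ := by
        intro hip
        exact hiw (fpr_letters w p₁ hp₁ i hip)
      have heq : FreeMonoid.toList p₁ ++ i :: FreeMonoid.toList q = w' ++ [i] := by
        have := congrArg FreeMonoid.toList hpq
        rw [FreeMonoid.toList_mul] at this
        rw [← hp₁₂, FreeMonoid.toList_mul, FreeMonoid.toList_of] at this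
        rw [hu₀, FreeMonoid.toList_ofList] at this
        rw [← this]
        simp
      have := (list_tail_eq _ _ _ _ hqi heq).1
      apply hq1
      exact FreeMonoid.toList.injective (by rw [this, FreeMonoid.toList_one])
    · exact Finsupp.notMem_support_iff.mp hsup
  rw [hterm1, hterm2, add_zero, hFu]


/-! ### the triangular argument and injectivity -/

lemma e_triangular (i : Fin n) (S' : Finset (Fin n)) (hiS : i ∉ S')
    (e : List (Fin n) →₀ ℤ)
    (hsupp : ∀ w ∈ e.support, w.Nodup ∧ ∀ k ∈ w, k ∈ S')
    (hzero : (e.sum fun w k => k • Bel i w) = 0) : e = 0 := by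
  by_contra he
  have hne : e.support.Nonempty := Finsupp.support_nonempty_iff.mpr he
  obtain ⟨wm, hwm, hmax⟩ := Finset.exists_max_image e.support List.length hne
  have hwmnd : wm.Nodup := (hsupp wm hwm).1
  have hiwm : i ∉ wm := fun hi => hiS ((hsupp wm hwm).2 i hi)
  have hu₀nd : (FreeMonoid.toList (FreeMonoid.ofList (wm ++ [i]))).Nodup := by
    rw [FreeMonoid.toList_ofList, List.nodup_append]
    refine ⟨hwmnd, List.nodup_singleton i, ?_⟩
    intro a ha b hb hab
    rw [List.mem_singleton] at hb
    subst hb hab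
    exact hiwm ha
  have hE : rmk (e.sum fun w k => k • rep i w) = 0 := by
    rw [← hzero]
    rw [map_finsuppSum]
    congr 1
    ext w k
    rw [map_zsmul, Bel_eq]
  have hdup := rmk_eq_zero_iff.mp hE
  have hcoef := hdup (FreeMonoid.ofList (wm ++ [i])) hu₀nd
  rw [MonoidAlgebra.coeff_finsuppSum, Finsupp.sum_apply] at hcoef
  rw [Finsupp.sum] at hcoef
  rw [Finset.sum_eq_single wm] at hcoef
  · rw [MonoidAlgebra.coeff_smul_apply, rep_coeff i wm wm hwmnd hiwm hiwm, if_pos (List.Sublist.refl wm)]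
      at hcoef
    simp only [smul_eq_mul, mul_one] at hcoef
    exact Finsupp.mem_support_iff.mp hwm hcoef
  · intro w hw hne'
    rw [MonoidAlgebra.coeff_smul_apply, rep_coeff i w wm (hsupp w hw).1
      (fun hi => hiS ((hsupp w hw).2 i hi)) hiwm]
    rw [if_neg, smul_zero]
    intro hsub
    apply hne'
    exact (hsub.eq_of_length (le_antisymm hsub.length_le (hmax w hw))).symm
  · intro h; exact absurd hwm h

/-- injectivity of the Magnus homomorphism on the normal-closure part -/
lemma ninj (i : Fin n) (S' : Finset (Fin n)) (hiS : i ∉ S') {m : RF n}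
    (hm : m ∈ Subgroup.closure (conjSet i S')) (hμ : μbar m = 1) : m = 1 := by
  have hlam : m ∈ Lam i S' := by
    have hle : Subgroup.closure (conjSet i S') ≤ Lam i S' := by
      rw [Subgroup.closure_le]
      rintro g ⟨v, hv, rfl⟩
      exact gen i S' hv
    exact hle hm
  obtain ⟨e, hsupp, rfl⟩ := lam_rep i S' hlam
  have hsum := sumform i e
  rw [hμ, Units.val_one] at hsum
  have hzero : (e.sum fun w k => k • Bel i w) = 0 := by
    have := hsum.symm
    rwa [add_eq_left] at this
  have he0 := e_triangular i S' hiS e hsupp hzero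
  rw [he0, PhiN_zero]
  rfl

/-- injectivity of the Magnus homomorphism on standard parabolic subgroups -/
lemma μbar_inj (S : Finset (Fin n)) :
    ∀ c ∈ Subgroup.closure (gens S), μbar c = 1 → c = 1 := by
  induction S using Finset.strongInduction with
  | _ S ih =>
    intro c hc hμ
    rcases S.eq_empty_or_nonempty with rfl | ⟨i, hi⟩
    · have hempty : gens (∅ : Finset (Fin n)) = (∅ : Set (RF n)) := by
        ext g; simp [gens]
      rw [hempty, Subgroup.closure_empty, Subgroup.mem_bot] at hc
      exact hc
    · have hc' : rho i c ∈ Subgroup.closure (gens (S.erase i)) := rho_maps_gens i S hc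
      have hμ' : μbar (rho i c) = 1 := by
        have h1 : μbar (rho i c) = (Units.map (DelR i : RR n →+* RR n).toMonoidHom) (μbar c) :=
          DFunLike.congr_fun (mu_rho i) c
        rw [h1, hμ, map_one]
      have hc1 : rho i c = 1 := ih (S.erase i) (Finset.erase_ssubset hi) _ hc' hμ'
      obtain ⟨m, hm, he⟩ := decomp i S hc
      rw [hc1, mul_one] at he
      subst he
      exact ninj i (S.erase i) (Finset.notMem_erase i S) hm hμ


/-! ### the commutant argument -/

def jfree (j : Fin n) (f : MA n) : Prop := ∀ w, j ∈ FreeMonoid.toList w → f w = 0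

lemma jfree_one (j : Fin n) : jfree j (1 : MA n) := by
  intro w hw
  rw [MonoidAlgebra.one_def, MonoidAlgebra.coeff_single, Finsupp.single_apply, if_neg]
  intro h
  rw [← h, FreeMonoid.toList_one] at hw
  simp at hw

lemma jfree_mul {j : Fin n} {f g : MA n} (hf : jfree j f) (hg : jfree j g) :
    jfree j (f * g) := by
  intro w hw
  rw [MonoidAlgebra.mul_apply, Finsupp.sum]
  apply Finset.sum_eq_zero; intro a _
  rw [Finsupp.sum]
  apply Finset.sum_eq_zero; intro b _
  split
  · rename_i hab
    rw [← hab, FreeMonoid.toList_mul, List.mem_append] at hw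
    rcases hw with h | h
    · rw [hf a h, zero_mul]
    · rw [hg b h, mul_zero]
  · rfl

/-- units whose value and inverse have `j`-free representatives -/
noncomputable def UJ (j : Fin n) : Subgroup (RR n)ˣ where
  carrier := {u | (∃ f, jfree j f ∧ rmk f = (u : RR n)) ∧
    (∃ g, jfree j g ∧ rmk g = ((u⁻¹ : (RR n)ˣ) : RR n))}
  one_mem' := by
    refine ⟨⟨1, jfree_one j, map_one _⟩, ⟨1, jfree_one j, ?_⟩⟩
    rw [inv_one, Units.val_one, map_one]
  mul_mem' := by
    rintro u v ⟨⟨f₁, hf₁, he₁⟩, ⟨g₁, hg₁, hei₁⟩⟩ ⟨⟨f₂, hf₂, he₂⟩, ⟨g₂, hg₂, hei₂⟩⟩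
    constructor
    · exact ⟨f₁ * f₂, jfree_mul hf₁ hf₂, by rw [map_mul, he₁, he₂, Units.val_mul]⟩
    · refine ⟨g₂ * g₁, jfree_mul hg₂ hg₁, ?_⟩
      rw [map_mul, hei₁, hei₂, mul_inv_rev, Units.val_mul]
  inv_mem' := by
    rintro u ⟨⟨f₁, hf₁, he₁⟩, ⟨g₁, hg₁, hei₁⟩⟩
    refine ⟨⟨g₁, hg₁, hei₁⟩, ⟨f₁, hf₁, ?_⟩⟩
    rw [inv_inv, he₁]

lemma μbar_mem_UJ (j : Fin n) {S : Finset (Fin n)} (hjS : j ∉ S) {c : RF n}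
    (hc : c ∈ Subgroup.closure (gens S)) : μbar c ∈ UJ j := by
  induction hc using Subgroup.closure_induction with
  | mem g hg =>
    obtain ⟨k, hk, rfl⟩ := hg
    have hkj : k ≠ j := fun h => hjS (h ▸ hk)
    rw [μbar_x]
    have hfree : jfree j (1 + MonoidAlgebra.single (FreeMonoid.of k) (1:ℤ)) := by
      intro w hw
      rw [MonoidAlgebra.coeff_add, Finsupp.add_apply, jfree_one j w hw, zero_add, MonoidAlgebra.coeff_single, Finsupp.single_apply, if_neg]
      intro h
      rw [← h, FreeMonoid.toList_of, List.mem_singleton] at hw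
      exact hkj hw.symm
    have hfree' : jfree j (1 - MonoidAlgebra.single (FreeMonoid.of k) (1:ℤ)) := by
      intro w hw
      rw [MonoidAlgebra.coeff_sub, Finsupp.sub_apply, jfree_one j w hw, zero_sub, MonoidAlgebra.coeff_single, Finsupp.single_apply, if_neg, neg_zero]
      intro h
      rw [← h, FreeMonoid.toList_of, List.mem_singleton] at hw
      exact hkj hw.symm
    constructor
    · refine ⟨1 + MonoidAlgebra.single (FreeMonoid.of k) 1, hfree, ?_⟩
      rw [map_add, map_one]
      rfl
    · refine ⟨1 - MonoidAlgebra.single (FreeMonoid.of k) 1, hfree', ?_⟩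
      rw [map_sub, map_one]
      rfl
  | one => rw [map_one]; exact one_mem _
  | mul g h _ _ ihg ihh => rw [map_mul]; exact mul_mem ihg ihh
  | inv g _ ihg => rw [map_inv]; exact inv_mem ihg

/-- the augmentation (constant coefficient) on the reduced ring -/
noncomputable def augc : RR n → ℤ :=
  Quotient.lift (fun f : MA n => f 1) (by
    intro f g hfg
    have h := (hfg : dupSupp (f - g)) 1 (by rw [FreeMonoid.toList_one]; exact List.nodup_nil)
    rw [MonoidAlgebra.coeff_sub, Finsupp.sub_apply] at h
    linarith)

lemma augc_rmk (f : MA n) : augc (rmk f) = f 1 := rfl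

lemma augc_mul (r s : RR n) : augc (r * s) = augc r * augc s := by
  obtain ⟨f, rfl⟩ := rmk_surjective r
  obtain ⟨g, rfl⟩ := rmk_surjective s
  rw [← map_mul, augc_rmk, augc_rmk, augc_rmk, eps_mul]

lemma augc_one : augc (1 : RR n) = 1 := by
  have : (1 : RR n) = rmk 1 := rfl
  rw [this, augc_rmk, MonoidAlgebra.one_def, MonoidAlgebra.coeff_single, Finsupp.single_apply, if_pos rfl]

/-- units with augmentation one -/
noncomputable def AugU : Subgroup (RR n)ˣ where
  carrier := {u | augc (u : RR n) = 1 ∧ augc ((u⁻¹ : (RR n)ˣ) : RR n) = 1}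
  one_mem' := by
    constructor
    · rw [Units.val_one, augc_one]
    · rw [inv_one, Units.val_one, augc_one]
  mul_mem' := by
    rintro u v ⟨h₁, h₂⟩ ⟨h₃, h₄⟩
    constructor
    · rw [Units.val_mul, augc_mul, h₁, h₃, mul_one]
    · rw [mul_inv_rev, Units.val_mul, augc_mul, h₂, h₄, mul_one]
  inv_mem' := by
    rintro u ⟨h₁, h₂⟩
    refine ⟨h₂, ?_⟩
    rw [inv_inv]
    exact h₁

lemma μ_mem_AugU (d : FreeGroup (Fin n)) : μ d ∈ AugU (n := n) := by
  induction d using FreeGroup.induction_on with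
  | C1 => rw [map_one]; exact one_mem _
  | of k =>
    show μ (FreeGroup.of k) ∈ AugU
    have h1 : μ (n := n) (FreeGroup.of k) = xunit k := by simp [μ, FreeGroup.lift_apply_of]
    rw [h1]
    constructor
    · show augc (1 + X k) = 1
      rw [X, show (1 : RR n) = rmk 1 from rfl, ← map_add, augc_rmk, MonoidAlgebra.coeff_add, Finsupp.add_apply]
      rw [MonoidAlgebra.one_def, MonoidAlgebra.coeff_single, Finsupp.single_apply, if_pos rfl, MonoidAlgebra.coeff_single, Finsupp.single_apply, if_neg]
      · rfl
      · intro h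
        have := congrArg FreeMonoid.toList h
        rw [FreeMonoid.toList_of, FreeMonoid.toList_one] at this
        simp at this
    · show augc (1 - X k) = 1
      rw [X, show (1 : RR n) = rmk 1 from rfl, ← map_sub, augc_rmk, MonoidAlgebra.coeff_sub, Finsupp.sub_apply]
      rw [MonoidAlgebra.one_def, MonoidAlgebra.coeff_single, Finsupp.single_apply, if_pos rfl, MonoidAlgebra.coeff_single, Finsupp.single_apply, if_neg]
      · rfl
      · intro h
        have := congrArg FreeMonoid.toList h
        rw [FreeMonoid.toList_of, FreeMonoid.toList_one] at this
        simp at this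
  | inv_of k ih =>
    rw [map_inv]
    exact inv_mem ih
  | mul a b iha ihb =>
    rw [map_mul]
    exact mul_mem iha ihb

lemma μbar_mem_AugU {c : RF n} : μbar c ∈ AugU (n := n) := by
  obtain ⟨w, rfl⟩ := mkRF_surjective (n := n) c
  exact μ_mem_AugU w

/-- key step: an element of the parabolic missing `j` commuting with `x j`
has trivial Magnus image -/
lemma commutant (j : Fin n) {c : RF n}
    (hc : c ∈ Subgroup.closure (gens (Finset.univ.erase j)))
    (hcomm : c * x j = x j * c) : μbar c = 1 := by
  obtain ⟨⟨f, hfree, hfval⟩, ⟨g, hgfree, hgval⟩⟩ :=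
    μbar_mem_UJ j (Finset.notMem_erase j Finset.univ) hc
  -- the commutation relation in the reduced ring
  have hvals : rmk f * (1 + X j) = (1 + X j) * rmk f := by
    have h1 := congrArg μbar hcomm
    rw [map_mul, map_mul, μbar_x] at h1
    have h2 := congrArg (Units.val) h1
    rw [Units.val_mul, Units.val_mul] at h2
    rw [hfval]
    exact h2
  have hXf : rmk f * X j = X j * rmk f := by
    have := hvals
    rw [mul_add, mul_one, add_mul, one_mul] at this
    exact add_left_cancel this
  have hdup : dupSupp (f * MonoidAlgebra.single (FreeMonoid.of j) 1
      - MonoidAlgebra.single (FreeMonoid.of j) 1 * f) := by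
    apply rmk_eq_iff.mp
    rw [map_mul, map_mul]
    exact hXf
  -- coefficients of f on nonempty nodup j-free words vanish
  have hcoefzero : ∀ w' : List (Fin n), w' ≠ [] → w'.Nodup → j ∉ w' →
      f (FreeMonoid.ofList w') = 0 := by
    intro w' hne hnd hjw'
    have hu₀nd : (FreeMonoid.toList (FreeMonoid.ofList (w' ++ [j]))).Nodup := by
      rw [FreeMonoid.toList_ofList, List.nodup_append]
      refine ⟨hnd, List.nodup_singleton j, ?_⟩
      intro a ha b hb hab
      rw [List.mem_singleton] at hb
      subst hb hab
      exact hjw' ha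
    have h3 := hdup _ hu₀nd
    rw [MonoidAlgebra.coeff_sub, Finsupp.sub_apply] at h3
    have h4 : (f * MonoidAlgebra.single (FreeMonoid.of j) (1:ℤ))
        (FreeMonoid.ofList (w' ++ [j])) = f (FreeMonoid.ofList w') := by
      rw [MonoidAlgebra.coeff_mul_single_eq_coeff_mul (x := f)
        (m := FreeMonoid.of j)
        (m₁ := FreeMonoid.ofList (w' ++ [j])) (FreeMonoid.ofList w'), mul_one]
      intro b _
      constructor
      · intro hb
        apply FreeMonoid.toList.injective
        have := congrArg FreeMonoid.toList hb
        rw [FreeMonoid.toList_mul, FreeMonoid.toList_of, FreeMonoid.toList_ofList] at this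
        rw [FreeMonoid.toList_ofList]
        exact List.append_cancel_right this
      · intro hb
        rw [hb]
        apply FreeMonoid.toList.injective
        rw [FreeMonoid.toList_mul, FreeMonoid.toList_of, FreeMonoid.toList_ofList,
          FreeMonoid.toList_ofList]
    have h5 : (MonoidAlgebra.single (FreeMonoid.of j) (1:ℤ) * f)
        (FreeMonoid.ofList (w' ++ [j])) = 0 := by
      by_cases hsup : FreeMonoid.ofList (w' ++ [j])
          ∈ (MonoidAlgebra.single (FreeMonoid.of j) (1:ℤ) * f).coeff.support
      · exfalso
        have h6 := MonoidAlgebra.support_coeff_mul_subset _ _ hsup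
        rw [Finset.mem_mul] at h6
        obtain ⟨p, hp, q, _, hpq⟩ := h6
        have hp' : p = FreeMonoid.of j := by
          have := Finsupp.support_single_subset hp; simpa using this
        subst hp'
        have h7 := congrArg FreeMonoid.toList hpq
        rw [FreeMonoid.toList_mul, FreeMonoid.toList_of, FreeMonoid.toList_ofList] at h7
        obtain ⟨a, t, hat⟩ : ∃ a t, w' = a :: t := by
          cases w' with
          | nil => exact absurd rfl hne
          | cons a t => exact ⟨a, t, rfl⟩
        rw [hat] at h7
        have : j = a := by
          have := congrArg (fun l => l.head?) h7
          simpa using this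
        apply hjw'
        rw [hat, this]
        simp
      · exact Finsupp.notMem_support_iff.mp hsup
    rw [h4, h5, sub_zero] at h3
    exact h3
  -- hence f is constant modulo duplicates
  have hconst : rmk f = rmk (MonoidAlgebra.single 1 (f 1)) := by
    apply rmk_eq_iff.mpr
    intro w hw
    rw [MonoidAlgebra.coeff_sub, Finsupp.sub_apply, MonoidAlgebra.coeff_single, Finsupp.single_apply]
    by_cases hw1 : w = 1
    · subst hw1
      rw [if_pos rfl, sub_self]
    · rw [if_neg (fun h => hw1 h.symm), sub_zero]
      by_cases hjw : j ∈ FreeMonoid.toList w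
      · exact hfree w hjw
      · have := hcoefzero (FreeMonoid.toList w) ?_ hw hjw
        · rw [FreeMonoid.ofList_toList] at this
          exact this
        · intro hnil
          apply hw1
          exact FreeMonoid.toList.injective (by rw [hnil, FreeMonoid.toList_one])
  -- the augmentation is 1
  have haug : f 1 = 1 := by
    have := (μbar_mem_AugU (c := c)).1
    rw [← hfval, augc_rmk] at this
    exact this
  apply Units.ext
  rw [← hfval, hconst, haug]
  rw [← MonoidAlgebra.one_def, map_one, Units.val_one]

end RFproof

/-- Uniqueness of the conjugating element in the subgroup generated by the
generators other than `x j`. -/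
theorem stmt5 (n : ℕ) (j : Fin n) (l l' : RF n)
    (hl : l ∈ Subgroup.closure {g : RF n | ∃ k : Fin n, k ≠ j ∧ g = x k})
    (hl' : l' ∈ Subgroup.closure {g : RF n | ∃ k : Fin n, k ≠ j ∧ g = x k})
    (h : l⁻¹ * x j * l = l'⁻¹ * x j * l') :
    l = l' := by
  classical
  have hseteq : {g : RF n | ∃ k : Fin n, k ≠ j ∧ g = x k}
      = RFproof.gens (Finset.univ.erase j) := by
    ext g
    constructor
    · rintro ⟨k, hk, rfl⟩
      exact ⟨k, Finset.mem_erase.mpr ⟨hk, Finset.mem_univ k⟩, rfl⟩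
    · rintro ⟨k, hk, rfl⟩
      exact ⟨k, (Finset.mem_erase.mp hk).1, rfl⟩
  rw [hseteq] at hl hl'
  set c := l * l'⁻¹ with hc
  have hcmem : c ∈ Subgroup.closure (RFproof.gens (Finset.univ.erase j)) :=
    mul_mem hl (inv_mem hl')
  have hcomm : c * x j = x j * c := by
    have e : x j * (l * l'⁻¹) = l * (l⁻¹ * x j * l) * l'⁻¹ := by group
    rw [hc, e, h]
    group
  have hμ : RFproof.μbar c = 1 := RFproof.commutant j hcmem hcomm
  have hc1 : c = 1 := RFproof.μbar_inj (Finset.univ.erase j) c hcmem hμ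
  rw [hc] at hc1
  exact mul_inv_eq_one.mp hc1
end

section
/- For any element z ∈ Z_2^{n−1}, the Gauss diagram G_z consisting of one positive arrow from strand i to strand n for each i with z_i = 1 (and no other arrows) satisfies (vlk_{i*}^{mod} + vlk_{*i}^{mod})(G_z) = z_i for all 1 ≤ i ≤ n−1. Consequently the map (vlk_{i*}^{mod} + vlk_{*i}^{mod})_{1 ≤ i ≤ n−1} from Gauss diagrams to Z_2^{n−1} is surjective. -/
/-- Gauss diagram data on `n` strands: a multiset of signed arrows
`(tail strand, head strand, sign)`, with sign `true` for `+1` and `false`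
for `-1`.  Stacking of diagrams corresponds to multiset union. -/
abbrev GD (n : ℕ) := Multiset (Fin n × Fin n × Bool)

/-- The integer sign of an arrow. -/
def sgn (b : Bool) : ℤ := if b then 1 else -1

/-- The virtual linking number `vlk i j`: the signed count of arrows with
tail on strand `i` and head on strand `j`. -/
def vlk {n : ℕ} (i j : Fin n) (D : GD n) : ℤ :=
  (D.map fun a => if a.1 = i ∧ a.2.1 = j then sgn a.2.2 else 0).sum

/-- The mod-2 total linking invariant `vlk_{i*} + vlk_{*i} (mod 2)` of
strand `i`. -/
def totMod2 {n : ℕ} (i : Fin n) (D : GD n) : ZMod 2 :=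
  (((Finset.univ.erase i).sum fun j => vlk i j D) +
    ((Finset.univ.erase i).sum fun j => vlk j i D) : ℤ)

/-- The Gauss diagram `G_z` on `n+1` strands: one positive arrow from strand
`i` to the last strand for each `i` with `z i = 1`. -/
def Gz {n : ℕ} (z : Fin n → ZMod 2) : GD (n + 1) :=
  ((Finset.univ.filter fun i : Fin n => z i = 1).val).map
    fun i => (i.castSucc, Fin.last n, true)

lemma vlk_Gz_tail {n : ℕ} (z : Fin n → ZMod 2) (i : Fin n) (j : Fin (n+1)) :
    vlk i.castSucc j (Gz z) =
      if j = Fin.last n ∧ z i = 1 then 1 else 0 := by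
  have : vlk i.castSucc j (Gz z) =
      ∑ k ∈ Finset.univ.filter (fun k => z k = 1),
        (if k = i ∧ Fin.last n = j then (1:ℤ) else 0) := by
    simp [vlk, Gz, Multiset.map_map, Finset.sum, sgn, Function.comp,
      Fin.castSucc_inj]
  rw [this]
  by_cases h2 : j = Fin.last n
  · subst h2
    simp [Finset.sum_ite_eq']
  · have h2' : Fin.last n ≠ j := fun h => h2 h.symm
    simp [h2, h2']

lemma vlk_Gz_head {n : ℕ} (z : Fin n → ZMod 2) (i : Fin n) (j : Fin (n+1)) :
    vlk j i.castSucc (Gz z) = 0 := by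
  have hne : (Fin.last n : Fin (n+1)) ≠ i.castSucc :=
    (Fin.castSucc_lt_last i).ne'
  simp [vlk, Gz, Multiset.map_map, Function.comp, hne]


/-- `G_z` realizes the prescribed value `z`, and consequently the invariant
`(vlk_{i*}^{mod} + vlk_{*i}^{mod})_{1 ≤ i ≤ n}` is surjective onto
`(ZMod 2)^n`. -/
theorem stmt11 (n : ℕ) :
    (∀ (z : Fin n → ZMod 2) (i : Fin n), totMod2 i.castSucc (Gz z) = z i) ∧
    Function.Surjective
      (fun (D : GD (n + 1)) (i : Fin n) => totMod2 i.castSucc D) := by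
  have key : ∀ (z : Fin n → ZMod 2) (i : Fin n), totMod2 i.castSucc (Gz z) = z i := by
    intro z i
    have h2 : ((Finset.univ.erase i.castSucc).sum fun j => vlk j i.castSucc (Gz z)) = 0 := by
      simp [vlk_Gz_head]
    have hmem : Fin.last n ∈ Finset.univ.erase i.castSucc := by
      simp [(Fin.castSucc_lt_last i).ne']
    have h1 : ((Finset.univ.erase i.castSucc).sum fun j => vlk i.castSucc j (Gz z)) =
        if z i = 1 then 1 else 0 := by
      rw [Finset.sum_eq_single_of_mem (Fin.last n) hmem]
      · simp [vlk_Gz_tail]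
      · intro j _ hj; simp [vlk_Gz_tail, hj]
    rw [totMod2, h1, h2]
    have hz : z i = 0 ∨ z i = 1 := by
      have : ∀ a : ZMod 2, a = 0 ∨ a = 1 := by decide
      exact this (z i)
    rcases hz with h | h <;> simp [h]
  refine ⟨key, fun z => ⟨Gz z, funext fun i => key z i⟩⟩
end

section
/- Let φ ∈ Aut_C(RF_n) be a conjugating automorphism of the reduced free group, and for each j let λ_j ∈ RF_{n−1}^{(j)} be the unique element with φ(x_j) = λ_j⁻¹ x_j λ_j. Define LK_{ij}(φ) := x_i^*(λ_j), where x_i^*: RF_n → Z is the homomorphism with x_i^*(x_i) = 1 and x_i^*(x_k) = 0 for k ≠ i. Then for φ, ψ ∈ Aut_C(RF_n), LK_{ij}(ψ ∘ φ) = LK_{ij}(φ) + LK_{ij}(ψ); i.e., LK_{ij} is a monoid homomorphism from (Aut_C(RF_n), ∘) to (Z, +). -/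
open scoped commutatorElement

/-- The integral Heisenberg group. -/
@[ext] structure H3 where
  a : ℤ
  b : ℤ
  c : ℤ

namespace H3

instance : Mul H3 := ⟨fun x y => ⟨x.a + y.a, x.b + y.b, x.c + y.c + x.a * y.b⟩⟩
instance : One H3 := ⟨⟨0, 0, 0⟩⟩
instance : Inv H3 := ⟨fun x => ⟨-x.a, -x.b, -x.c + x.a * x.b⟩⟩

@[simp] lemma mul_a (x y : H3) : (x * y).a = x.a + y.a := rfl
@[simp] lemma mul_b (x y : H3) : (x * y).b = x.b + y.b := rfl
@[simp] lemma mul_c (x y : H3) : (x * y).c = x.c + y.c + x.a * y.b := rfl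
@[simp] lemma one_a : (1 : H3).a = 0 := rfl
@[simp] lemma one_b : (1 : H3).b = 0 := rfl
@[simp] lemma one_c : (1 : H3).c = 0 := rfl
@[simp] lemma inv_a (x : H3) : x⁻¹.a = -x.a := rfl
@[simp] lemma inv_b (x : H3) : x⁻¹.b = -x.b := rfl
@[simp] lemma inv_c (x : H3) : x⁻¹.c = -x.c + x.a * x.b := rfl

instance : Group H3 where
  mul_assoc x y z := by ext <;> simp <;> ring
  one_mul x := by ext <;> simp
  mul_one x := by ext <;> simp
  inv_mul_cancel x := by ext <;> simp

/-- Two elements with the same `a` and `b` coordinates commute. -/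
lemma commutator_eq_one {u v : H3} (ha : u.a = v.a) (hb : u.b = v.b) :
    ⁅u, v⁆ = 1 := by
  ext <;> simp [commutatorElement_def, ha, hb] <;> ring

/-- The relators of the reduced free group hold in `H3`. -/
lemma conj_comm_rel (u g : H3) : ⁅u, g * u * g⁻¹⁆ = 1 :=
  commutator_eq_one (by simp) (by simp)

def X : H3 := ⟨1, 0, 0⟩
def Y : H3 := ⟨0, 1, 0⟩

/-- Projection onto the `a` coordinate as a monoid hom. -/
def projA : H3 →* Multiplicative ℤ where
  toFun u := Multiplicative.ofAdd u.a
  map_one' := rfl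
  map_mul' _ _ := rfl

/-- Projection onto the `b` coordinate as a monoid hom. -/
def projB : H3 →* Multiplicative ℤ where
  toFun u := Multiplicative.ofAdd u.b
  map_one' := rfl
  map_mul' _ _ := rfl

lemma conj_Y {g : H3} (hb : g.b = 0) : g⁻¹ * Y * g = ⟨0, 1, -g.a⟩ := by
  ext <;> simp [Y, hb] <;> ring

end H3

open H3 in
/-- The homomorphism `RF n → H3` sending `x i ↦ X`, `x j ↦ Y` and every other
generator to `1`. -/
def Fhom {n : ℕ} (i j : Fin n) : RF n →* H3 :=
  QuotientGroup.lift _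
    (FreeGroup.lift (fun k => if k = i then X else if k = j then Y else 1))
    (by
      intro w hw
      refine Subgroup.normalClosure_le_normal ?_ hw
      rintro w ⟨i', g, rfl⟩
      rw [SetLike.mem_coe, MonoidHom.mem_ker, map_commutatorElement,
        map_mul, map_mul, map_inv]
      exact H3.conj_comm_rel _ _)

@[simp] lemma Fhom_x {n : ℕ} (i j k : Fin n) :
    Fhom i j (x k) = (if k = i then H3.X else if k = j then H3.Y else 1) := by
  simp only [Fhom, x]
  erw [QuotientGroup.lift_mk]
  simp

/-- Homomorphisms out of `RF n` are determined by their values on generators. -/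
lemma RF.hom_ext {n : ℕ} {M : Type*} [Group M] {f g : RF n →* M}
    (h : ∀ k, f (x k) = g (x k)) : f = g := by
  have key : ∀ v : FreeGroup (Fin n),
      f (QuotientGroup.mk v) = g (QuotientGroup.mk v) := by
    intro v
    induction v using FreeGroup.induction_on with
    | C1 => exact (map_one f).trans (map_one g).symm
    | of k => exact h k
    | inv_of k hk =>
        exact (map_inv f (QuotientGroup.mk (FreeGroup.of k) : RF n)).trans
          ((congrArg (·⁻¹) hk).trans (map_inv g _).symm)
    | mul u v hu hv =>
        exact (map_mul f (QuotientGroup.mk u : RF n) (QuotientGroup.mk v)).trans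
          ((congrArg₂ (· * ·) hu hv).trans (map_mul g _ _).symm)
  ext w
  obtain ⟨v, rfl⟩ := QuotientGroup.mk_surjective w
  exact key v

/-- `LK_{ij}` is additive under composition of conjugating automorphisms:
if `φ(x j) = λ_j⁻¹ x_j λ_j`, `ψ(x j) = μ_j⁻¹ x_j μ_j` and
`(ψ ∘ φ)(x j) = ν_j⁻¹ x_j ν_j` with conjugators in the subgroup generated by
the generators other than `x j`, then for `i ≠ j` the `x i`-exponent of `ν_j`
is the sum of those of `λ_j` and `μ_j`; i.e. `LK_{ij}` is a monoid
homomorphism `Aut_C(RF_n) → ℤ`. -/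
theorem stmt13 (n : ℕ)
    (xstar : Fin n → (RF n →* Multiplicative ℤ))
    (hx1 : ∀ i : Fin n, xstar i (x i) = Multiplicative.ofAdd 1)
    (hx0 : ∀ i k : Fin n, k ≠ i → xstar i (x k) = 1)
    (φ ψ : RF n ≃* RF n)
    (hφconj : ∀ i : Fin n, ∃ w : RF n, φ (x i) = w⁻¹ * x i * w)
    (hψconj : ∀ i : Fin n, ∃ w : RF n, ψ (x i) = w⁻¹ * x i * w)
    (lφ lψ lc : Fin n → RF n)
    (hlφ : ∀ j : Fin n,
      lφ j ∈ Subgroup.closure {g : RF n | ∃ k : Fin n, k ≠ j ∧ g = x k} ∧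
      φ (x j) = (lφ j)⁻¹ * x j * lφ j)
    (hlψ : ∀ j : Fin n,
      lψ j ∈ Subgroup.closure {g : RF n | ∃ k : Fin n, k ≠ j ∧ g = x k} ∧
      ψ (x j) = (lψ j)⁻¹ * x j * lψ j)
    (hlc : ∀ j : Fin n,
      lc j ∈ Subgroup.closure {g : RF n | ∃ k : Fin n, k ≠ j ∧ g = x k} ∧
      ψ (φ (x j)) = (lc j)⁻¹ * x j * lc j) :
    ∀ i j : Fin n, i ≠ j →
      Multiplicative.toAdd (xstar i (lc j)) =
        Multiplicative.toAdd (xstar i (lφ j)) +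
          Multiplicative.toAdd (xstar i (lψ j)) := by
  intro i j hij
  set F := Fhom i j with hF
  -- the a-coordinate of F computes xstar i
  have hA : H3.projA.comp F = xstar i := by
    apply RF.hom_ext
    intro k
    simp only [MonoidHom.comp_apply, hF, Fhom_x]
    rcases eq_or_ne k i with hk | hk
    · rw [if_pos hk, hk, hx1 i]; rfl
    · rw [if_neg hk, hx0 i k hk]
      rcases eq_or_ne k j with hk' | hk'
      · rw [if_pos hk']; rfl
      · rw [if_neg hk']; rfl
  -- the b-coordinate of F computes xstar j
  have hB : H3.projB.comp F = xstar j := by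
    apply RF.hom_ext
    intro k
    simp only [MonoidHom.comp_apply, hF, Fhom_x]
    rcases eq_or_ne k i with hk | hk
    · have hkj : k ≠ j := by rw [hk]; exact hij
      rw [if_pos hk, hx0 j k hkj]; rfl
    · rw [if_neg hk]
      rcases eq_or_ne k j with hk' | hk'
      · rw [if_pos hk', hk', hx1 j]; rfl
      · rw [if_neg hk', hx0 j k hk']; rfl
  have hFa : ∀ w : RF n, (F w).a = Multiplicative.toAdd (xstar i w) := by
    intro w; rw [← hA]; rfl
  have hFb : ∀ w : RF n, (F w).b = Multiplicative.toAdd (xstar j w) := by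
    intro w; rw [← hB]; rfl
  -- xstar j kills the subgroup generated by the other generators
  have hkill : ∀ w ∈ Subgroup.closure {g : RF n | ∃ k : Fin n, k ≠ j ∧ g = x k},
      xstar j w = 1 := by
    intro w hw
    refine Subgroup.closure_induction ?_ (map_one _) ?_ ?_ hw
    · rintro g ⟨k, hk, rfl⟩; exact hx0 j k hk
    · intro u v _ _ hu hv; rw [map_mul, hu, hv, mul_one]
    · intro u _ hu; rw [map_inv, hu, inv_one]
  -- xstar precomposed with the conjugating automorphism ψ is unchanged
  have habel : ∀ (a b : Multiplicative ℤ), a⁻¹ * b * a = b := by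
    intro a b; rw [mul_comm a⁻¹ b, mul_assoc, inv_mul_cancel, mul_one]
  have hψinv : ∀ (m : Fin n) (w : RF n), xstar m (ψ w) = xstar m w := by
    intro m w
    have : (xstar m).comp (MulEquiv.toMonoidHom ψ) = xstar m := by
      apply RF.hom_ext
      intro k
      obtain ⟨g, hg⟩ := hψconj k
      simp only [MonoidHom.comp_apply, MulEquiv.coe_toMonoidHom, hg]
      rw [map_mul, map_mul, map_inv]
      exact habel _ _
    exact DFunLike.congr_fun this w
  -- compute F (ψ (φ (x j))) in two ways
  have hxj : F (x j) = H3.Y := by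
    rw [hF, Fhom_x, if_neg (Ne.symm hij), if_pos rfl]
  have hlcb : (F (lc j)).b = 0 := by
    rw [hFb, hkill _ (hlc j).1]; rfl
  have e1 : F (ψ (φ (x j))) = ⟨0, 1, -(F (lc j)).a⟩ := by
    rw [(hlc j).2, map_mul, map_mul, map_inv, hxj]
    exact H3.conj_Y hlcb
  have hcomp : ψ (φ (x j)) = (lψ j * ψ (lφ j))⁻¹ * x j * (lψ j * ψ (lφ j)) := by
    rw [(hlφ j).2, map_mul, map_mul, map_inv, (hlψ j).2]
    group
  have hwb : (F (lψ j * ψ (lφ j))).b = 0 := by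
    rw [hFb, map_mul, hkill _ (hlψ j).1, hψinv j, hkill _ (hlφ j).1, mul_one]; rfl
  have e2 : F (ψ (φ (x j))) = ⟨0, 1, -(F (lψ j * ψ (lφ j))).a⟩ := by
    rw [hcomp, map_mul, map_mul, map_inv, hxj]
    exact H3.conj_Y hwb
  have e3 : -(F (lc j)).a = -(F (lψ j * ψ (lφ j))).a :=
    congrArg H3.c (e1.symm.trans e2)
  have e4 : (F (lψ j * ψ (lφ j))).a = (F (lψ j)).a + (F (ψ (lφ j))).a := by
    rw [map_mul]; rfl
  rw [e4] at e3
  rw [hFa, hFa, hFa, hψinv i] at e3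
  linarith
end
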